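/- arXiv:2501.03951 — 6 statements merged into one kernel-verified Lean document; each statement's English description precedes it below -/
import Mathlib

section
/- For every real number φ with −π ≤ φ ≤ π, one has 2·(1 + cos φ) ≤ 4·exp(−φ²/4). Equivalently, writing f(z) := log(2 + z + z⁻¹), for every φ ∈ (−π, π) one has Re f(e^{iφ}) = log(2(1+cos φ)) ≤ log 4 − φ²/4. -/
lemma aux0 (φ : ℝ) (h1 : 0 ≤ φ) (h2 : φ ≤ Real.pi) :
    2 * (1 + Real.cos φ) ≤ 4 * Real.exp (-φ ^ 2 / 4) := by
  set y := φ / 4 with hy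
  have hpi : Real.pi ≤ 4 := by linarith [Real.pi_le_four]
  have hy0 : 0 ≤ y := by positivity
  have hy1 : y ≤ 1 := by rw [hy]; linarith
  -- sin lower bound
  have hsin : y - y ^ 3 / 4 ≤ Real.sin y := by
    rcases eq_or_lt_of_le hy0 with h | h
    · simp [← h]
    · have := Real.sin_gt_sub_cube h; linarith [pow_nonneg hy0 3]
  have hsin0 : 0 ≤ y - y ^ 3 / 4 := by nlinarith [sq_nonneg y, mul_nonneg hy0 hy0]
  -- cos (φ/2) = 1 - 2 sin y ^ 2
  have hcos2 : Real.cos (φ / 2) = 1 - 2 * Real.sin y ^ 2 := by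
    have : φ / 2 = 2 * y := by rw [hy]; ring
    rw [this, Real.cos_two_mul]
    nlinarith [Real.sin_sq_add_cos_sq y]
  -- cos φ = 2 cos(φ/2)^2 - 1
  have hcos1 : Real.cos φ = 2 * Real.cos (φ / 2) ^ 2 - 1 := by
    have : φ = 2 * (φ / 2) := by ring
    rw [this, Real.cos_two_mul]; ring_nf
  have hcosnn : 0 ≤ Real.cos (φ / 2) :=
    Real.cos_nonneg_of_mem_Icc ⟨by linarith [Real.pi_pos], by linarith⟩
  -- cos (φ/2) ≤ 1 - 2 (y - y^3/4)^2 ≤ (1 - y^2)^2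
  have hcb : Real.cos (φ / 2) ≤ (1 - y ^ 2) ^ 2 := by
    rw [hcos2]; nlinarith [sq_nonneg y, sq_nonneg (y^3)]
  -- exp lower bound
  have ha1 : 0 ≤ 1 - y ^ 2 := by nlinarith
  have hexp : (1 - y ^ 2) ^ 4 ≤ Real.exp (-φ ^ 2 / 4) := by
    have h1e : 1 - y ^ 2 ≤ Real.exp (-(y ^ 2)) := by
      linarith [Real.add_one_le_exp (-(y ^ 2))]
    calc (1 - y ^ 2) ^ 4 ≤ Real.exp (-(y ^ 2)) ^ 4 := by
          exact pow_le_pow_left₀ ha1 h1e 4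
      _ = Real.exp (-φ ^ 2 / 4) := by
          rw [← Real.exp_nat_mul]; congr 1; rw [hy]; ring
  have hsq : Real.cos (φ / 2) ^ 2 ≤ (1 - y ^ 2) ^ 4 := by
    calc Real.cos (φ / 2) ^ 2 ≤ ((1 - y ^ 2) ^ 2) ^ 2 :=
        pow_le_pow_left₀ hcosnn hcb 2
      _ = (1 - y ^ 2) ^ 4 := by ring
  rw [hcos1]; linarith

/-- For every real `φ` with `-π ≤ φ ≤ π`, one has `2·(1 + cos φ) ≤ 4·exp(-φ²/4)`. -/
theorem stmt0 (φ : ℝ) (h1 : -Real.pi ≤ φ) (h2 : φ ≤ Real.pi) :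
    2 * (1 + Real.cos φ) ≤ 4 * Real.exp (-φ ^ 2 / 4) := by
  rcases le_or_gt 0 φ with h | h
  · exact aux0 φ h h2
  · have := aux0 (-φ) (by linarith) (by linarith)
    simpa [Real.cos_neg, neg_pow] using this
end

section
/- Let q ∈ (0,1) be real and let w ∈ ℂ satisfy |1 − w| ≤ (1−q)/2. Then there exists θ ∈ ℂ with |θ| ≤ 2·|1−w|·q/(1−q)² such that (q·w; q)_∞ = e^θ · (q; q)_∞, i.e. ∏_{n=0}^∞ (1 − w·q^{n+1}) = e^θ · ∏_{n=0}^∞ (1 − q^{n+1}). -/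
open Complex

lemma hasProd_one_add {v : ℕ → ℂ} (h0 : ∀ n, 1 + v n ≠ 0)
    (hs : Summable fun n => Complex.log (1 + v n)) :
    HasProd (fun n => 1 + v n) (Complex.exp (∑' n, Complex.log (1 + v n))) := by
  have h := hs.hasSum.cexp
  have he : (Complex.exp ∘ fun n => Complex.log (1 + v n)) = fun n => 1 + v n :=
    funext fun n => Complex.exp_log (h0 n)
  rwa [he] at h

/-- If `q ∈ (0,1)` and `|1-w| ≤ (1-q)/2`, then
`(qw;q)_∞ = e^θ (q;q)_∞` for some `θ` with `|θ| ≤ 2|1-w|q/(1-q)²`. -/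
theorem stmt2 (q : ℝ) (hq0 : 0 < q) (hq1 : q < 1) (w : ℂ)
    (hw : ‖1 - w‖ ≤ (1 - q) / 2) :
    ∃ θ : ℂ, ‖θ‖ ≤ 2 * ‖1 - w‖ * q / (1 - q) ^ 2 ∧
      (∏' n : ℕ, (1 - w * (q : ℂ) ^ (n + 1))) =
        Complex.exp θ * ∏' n : ℕ, (1 - (q : ℂ) ^ (n + 1)) := by
  have hq1' : (0:ℝ) < 1 - q := by linarith
  have hqpow : ∀ n : ℕ, 0 < 1 - q ^ (n + 1) := by
    intro n
    have : q ^ (n+1) < 1 := pow_lt_one₀ hq0.le hq1 (Nat.succ_ne_zero n)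
    linarith
  have hqle : ∀ n : ℕ, 1 - q ≤ 1 - q ^ (n + 1) := by
    intro n
    have : q ^ (n+1) ≤ q := pow_le_of_le_one hq0.le hq1.le (Nat.succ_ne_zero n)
    linarith
  have hqpow1 : ∀ n : ℕ, q ^ (n+1) ≤ q := fun n =>
    pow_le_of_le_one hq0.le hq1.le (Nat.succ_ne_zero n)
  have hne : ∀ n : ℕ, (1 : ℂ) - (q:ℂ) ^ (n + 1) ≠ 0 := by
    intro n
    have : ((1 - q ^ (n+1) : ℝ) : ℂ) ≠ 0 := by exact_mod_cast (hqpow n).ne'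
    simpa [sub_eq_zero] using this
  set z : ℕ → ℂ := fun n => (1 - w) * (q : ℂ) ^ (n + 1) / (1 - (q:ℂ) ^ (n + 1)) with hz
  set a : ℝ := ‖1 - w‖ with ha
  have ha0 : 0 ≤ a := norm_nonneg _
  have habsq : ∀ n : ℕ, ‖1 - (q:ℂ) ^ (n+1)‖ = 1 - q ^ (n+1) := by
    intro n
    have : (1 : ℂ) - (q:ℂ) ^ (n + 1) = ((1 - q ^ (n+1) : ℝ) : ℂ) := by push_cast; ring
    rw [this, Complex.norm_real, Real.norm_of_nonneg (hqpow n).le]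
  have hzbound : ∀ n : ℕ, ‖z n‖ ≤ a / (1 - q) * q ^ (n+1) := by
    intro n
    rw [hz]
    simp only [norm_div, norm_mul, habsq]
    rw [norm_pow, Complex.norm_real, Real.norm_of_nonneg hq0.le]
    rw [div_le_iff₀ (hqpow n)]
    have h1 : a / (1 - q) * q ^ (n + 1) * (1 - q ^ (n + 1))
        = a * q ^ (n+1) * ((1 - q^(n+1)) / (1 - q)) := by ring
    rw [h1, ← ha]
    have h2 : (1:ℝ) ≤ (1 - q^(n+1)) / (1 - q) := by
      rw [le_div_iff₀ hq1']; simpa using hqle n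
    exact le_mul_of_one_le_right (by positivity) h2
  have hzhalf : ∀ n : ℕ, ‖z n‖ ≤ 1 / 2 := by
    intro n
    refine (hzbound n).trans ?_
    have h2 : a / (1 - q) ≤ 1/2 := by rw [div_le_iff₀ hq1']; linarith
    have h3 : q ^ (n+1) ≤ 1 := pow_le_one₀ hq0.le hq1.le
    nlinarith [pow_pos hq0 (n+1), div_nonneg ha0 hq1'.le]
  have h0 : ∀ n, (1:ℂ) + z n ≠ 0 := by
    intro n h
    have h1 : z n = -1 := by linear_combination h
    have := hzhalf n
    rw [h1] at this
    norm_num at this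
  -- bound on logs
  have hlog : ∀ n : ℕ, ‖Complex.log (1 + z n)‖ ≤ (3/2 * (a / (1 - q)) * q) * q ^ n := by
    intro n
    refine (Complex.norm_log_one_add_half_le_self (by simpa using hzhalf n)).trans ?_
    have hb : ‖z n‖ ≤ a / (1 - q) * q ^ (n+1) := hzbound n
    calc (3/2:ℝ) * ‖z n‖ ≤ 3/2 * (a / (1 - q) * q ^ (n+1)) := by linarith
      _ = 3/2 * (a / (1 - q)) * q * q ^ n := by ring
  have hsumgeo : Summable fun n : ℕ => (3/2 * (a / (1 - q)) * q) * q ^ n :=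
    (summable_geometric_of_lt_one hq0.le hq1).mul_left _
  have hsum : Summable fun n => Complex.log (1 + z n) :=
    Summable.of_norm (hsumgeo.of_nonneg_of_le (fun n => norm_nonneg _) hlog)
  set θ : ℂ := ∑' n, Complex.log (1 + z n) with hθ
  have hp1 : HasProd (fun n => 1 + z n) (Complex.exp θ) := hasProd_one_add h0 hsum
  -- the plain product
  have hlog2 : ∀ n : ℕ, ‖Complex.log (1 + (-(q:ℂ) ^ (n+1)))‖ ≤
      (q^2 * (1-q)⁻¹ / 2 + q) * q ^ n := by
    intro n
    have ht : ‖(-(q:ℂ) ^ (n+1))‖ = q ^ (n+1) := by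
      rw [norm_neg, norm_pow, Complex.norm_real, Real.norm_of_nonneg hq0.le]
    have ht1 : ‖(-(q:ℂ) ^ (n+1))‖ < 1 := by
      rw [ht]; exact pow_lt_one₀ hq0.le hq1 (Nat.succ_ne_zero n)
    refine (Complex.norm_log_one_add_le ht1).trans ?_
    rw [ht]
    have hqn1 : q^n ≤ 1 := pow_le_one₀ hq0.le hq1.le
    have hqn0 : (0:ℝ) ≤ q^n := pow_nonneg hq0.le n
    have e1 : (q^(n+1))^2 ≤ q^2 * q^n := by
      have hh : q^(n+1) = q*q^n := by ring
      have h6 : (q^n)^2 ≤ q^n := by nlinarith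
      calc (q^(n+1))^2 = q^2*(q^n)^2 := by rw [hh]; ring
        _ ≤ q^2 * q^n := mul_le_mul_of_nonneg_left h6 (sq_nonneg q)
    have e2 : (1 - q^(n+1))⁻¹ ≤ (1-q)⁻¹ := by
      apply inv_anti₀ hq1'
      exact hqle n
    have e3 : (q^(n+1))^2 * (1 - q^(n+1))⁻¹ / 2 ≤ q^2 * q^n * (1-q)⁻¹ / 2 := by
      have h4 : (0:ℝ) ≤ (q^(n+1))^2 := sq_nonneg _
      have h5 : (0:ℝ) ≤ (1 - q^(n+1))⁻¹ := inv_nonneg.mpr (hqpow n).le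
      nlinarith [inv_nonneg.mpr hq1'.le]
    have e4 : q^(n+1) = q * q^n := by ring
    nlinarith [e3]
  have hsum2 : Summable fun n : ℕ => Complex.log (1 + (-(q:ℂ) ^ (n+1))) := by
    refine Summable.of_norm (Summable.of_nonneg_of_le (fun n => norm_nonneg _) hlog2 ?_)
    exact (summable_geometric_of_lt_one hq0.le hq1).mul_left _
  have h02 : ∀ n : ℕ, (1:ℂ) + (-(q:ℂ) ^ (n+1)) ≠ 0 := by
    intro n
    simpa [sub_eq_add_neg] using hne n
  have hp2 := hasProd_one_add h02 hsum2
  -- combine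
  have hp3 : HasProd (fun n : ℕ => (1 + z n) * (1 + (-(q:ℂ) ^ (n+1))))
      (Complex.exp θ * Complex.exp (∑' n, Complex.log (1 + (-(q:ℂ) ^ (n+1))))) :=
    hp1.mul hp2
  have hfe : (fun n : ℕ => (1 + z n) * (1 + (-(q:ℂ) ^ (n+1))))
      = fun n : ℕ => 1 - w * (q:ℂ) ^ (n+1) := by
    funext n
    have h : z n * (1 - (q:ℂ)^(n+1)) = (1 - w) * (q:ℂ)^(n+1) := by
      rw [hz]; exact div_mul_cancel₀ _ (hne n)
    calc (1 + z n) * (1 + -(q:ℂ)^(n+1))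
        = (1 - (q:ℂ)^(n+1)) + z n * (1 - (q:ℂ)^(n+1)) + (-(q:ℂ)^(n+1)) * (z n * (1 - (q:ℂ)^(n+1))) / (1 - (q:ℂ)^(n+1)) - (-(q:ℂ)^(n+1)) * (z n * (1 - (q:ℂ)^(n+1))) / (1 - (q:ℂ)^(n+1)) := by ring
      _ = 1 - w * (q:ℂ)^(n+1) := by rw [h]; field_simp; ring
  rw [hfe] at hp3
  refine ⟨θ, ?_, ?_⟩
  · -- norm bound
    have hb1 : ‖θ‖ ≤ ∑' n : ℕ, ‖Complex.log (1 + z n)‖ := by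
      rw [hθ]
      exact norm_tsum_le_tsum_norm (hsumgeo.of_nonneg_of_le (fun n => norm_nonneg _) hlog)
    have hb2 : (∑' n : ℕ, ‖Complex.log (1 + z n)‖)
        ≤ ∑' n : ℕ, (3/2 * (a / (1 - q)) * q) * q ^ n :=
      Summable.tsum_le_tsum hlog
        (hsumgeo.of_nonneg_of_le (fun n => norm_nonneg _) hlog) hsumgeo
    have hb3 : (∑' n : ℕ, (3/2 * (a / (1 - q)) * q) * q ^ n)
        = (3/2 * (a / (1 - q)) * q) * (1 - q)⁻¹ := by
      rw [tsum_mul_left, tsum_geometric_of_lt_one hq0.le hq1]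
    have hb4 : (3/2 * (a / (1 - q)) * q) * (1 - q)⁻¹ ≤ 2 * a * q / (1 - q) ^ 2 := by
      have he : (3/2 * (a / (1 - q)) * q) * (1 - q)⁻¹ = 3/2 * a * q / (1-q)^2 := by
        rw [div_eq_mul_inv, div_eq_mul_inv, sq, div_eq_mul_inv, mul_inv]; ring
      rw [he, div_le_div_iff₀ (by positivity) (by positivity)]
      nlinarith [mul_nonneg (mul_nonneg ha0 hq0.le) (sq_nonneg (1-q))]
    calc ‖θ‖ ≤ _ := hb1
      _ ≤ _ := hb2
      _ = _ := hb3
      _ ≤ _ := hb4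
  · rw [hp3.tprod_eq]
    congr 1
    rw [← hp2.tprod_eq]
    exact tprod_congr fun n => by ring
end

section
/- Let q ∈ (0,1) be real, let a ∈ ℂ with |a| ≤ 1, let φ ∈ ℝ, and set z := e^{iφ}. Then |(a·z; q)_∞ · (a·z^{−1}; q)_∞| ≥ ((|a|; q)_∞)² ≥ (1 − |a|)² · ((q; q)_∞)². (With a = A ∈ [0,1] this is the lower bound of Lemma lemAN, |(Az, Az^{−1};q)_∞| ≥ ((A,q)_∞)² ≥ (1−A)²((q;q)_∞)²; with a = B ∈ [−1,0] it gives the lower bound of Lemma lemBN.) -/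
open Complex Filter

lemma hasProd_zero_of_eq_zero {M : Type*} [CommMonoidWithZero M] [TopologicalSpace M]
    {f : ℕ → M} (i : ℕ) (h : f i = 0) : HasProd f 0 := by
  refine tendsto_const_nhds.congr' ?_
  filter_upwards [Filter.eventually_ge_atTop ({i} : Finset ℕ)] with s hs
  exact (Finset.prod_eq_zero (by simpa using hs) h).symm

lemma mult_aux {q : ℝ} (hq0 : 0 < q) (hq1 : q < 1) (c : ℂ) (hc : ‖c‖ ≤ 1) :
    Multipliable (fun k : ℕ => (1 - c * (q : ℂ) ^ k)) := by
  by_cases hz : ∃ k, (1 : ℂ) - c * (q : ℂ) ^ k = 0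
  · obtain ⟨k, hk⟩ := hz
    exact ⟨0, hasProd_zero_of_eq_zero k hk⟩
  push_neg at hz
  have hqk : ∀ k : ℕ, ‖-(c * (q : ℂ) ^ (k + 1))‖ ≤ q ^ (k + 1) := by
    intro k
    rw [norm_neg, norm_mul, norm_pow, Complex.norm_real, Real.norm_eq_abs,
      abs_of_pos hq0]
    calc ‖c‖ * q ^ (k+1) ≤ 1 * q ^ (k+1) := by
          apply mul_le_mul_of_nonneg_right _ (by positivity)
          exact hc
      _ = q ^ (k+1) := one_mul _
  have hsumtail : Summable (fun k : ℕ => Complex.log (1 - c * (q : ℂ) ^ (k + 1))) := by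
    set C : ℝ := q * (1 - q)⁻¹ / 2 + 1 with hC
    have hgeo : Summable (fun k : ℕ => q ^ k * C) :=
      (summable_geometric_of_lt_one hq0.le hq1).mul_right C
    have hg : Summable (fun k : ℕ => q ^ (k + 1) * C) := by
      exact hgeo.comp_injective (add_left_injective 1)
    apply Summable.of_norm_bounded hg
    intro k
    have hqlt : q ^ (k+1) ≤ q := by
      calc q ^ (k+1) ≤ q ^ 1 := pow_le_pow_of_le_one hq0.le hq1.le (by omega)
        _ = q := pow_one q
    have hnlt : ‖-(c * (q : ℂ) ^ (k + 1))‖ < 1 := lt_of_le_of_lt (le_trans (hqk k) hqlt) hq1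
    have hb := Complex.norm_log_one_add_le hnlt
    rw [show (1 : ℂ) + -(c * (q:ℂ)^(k+1)) = 1 - c * (q:ℂ)^(k+1) by ring] at hb
    refine hb.trans ?_
    set x := ‖-(c * (q : ℂ) ^ (k + 1))‖ with hx
    have hx0 : 0 ≤ x := norm_nonneg _
    have hx1 : x ≤ q ^ (k+1) := hqk k
    have hxq : x ≤ q := hx1.trans hqlt
    have h1 : x ^ 2 * (1 - x)⁻¹ / 2 ≤ q ^ (k+1) * (q * (1-q)⁻¹) / 2 := by
      rw [pow_two, mul_assoc x]
      have hinv : (1 - x)⁻¹ ≤ (1 - q)⁻¹ := inv_anti₀ (by linarith) (by linarith)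
      have h2 : x * (1-x)⁻¹ ≤ q * (1-q)⁻¹ :=
        mul_le_mul hxq hinv (inv_nonneg.2 (by linarith)) hq0.le
      have h3 := mul_le_mul hx1 h2 (mul_nonneg hx0 (inv_nonneg.2 (by linarith))) (by positivity)
      linarith
    rw [hC]
    calc x ^ 2 * (1 - x)⁻¹ / 2 + x ≤ q ^ (k+1) * (q * (1-q)⁻¹) / 2 + q ^ (k+1) :=
          add_le_add h1 hx1
      _ = q ^ (k + 1) * (q * (1 - q)⁻¹ / 2 + 1) := by ring
  have hfull : Summable (fun k : ℕ => Complex.log (1 - c * (q : ℂ) ^ k)) :=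
    (summable_nat_add_iff 1).mp hsumtail
  exact Complex.multipliable_of_summable_log hfull

lemma mult_real {q : ℝ} (hq0 : 0 < q) (hq1 : q < 1) {r : ℝ} (hr0 : 0 ≤ r) (hr1 : r ≤ 1) :
    Multipliable (fun k : ℕ => (1 - r * q ^ k)) := by
  have h := (mult_aux hq0 hq1 (r : ℂ)
    (by rwa [Complex.norm_real, Real.norm_eq_abs, _root_.abs_of_nonneg hr0])).norm
  refine h.congr fun k => ?_
  have hle : r * q ^ k ≤ 1 :=
    mul_le_one₀ hr1 (by positivity) (pow_le_one₀ hq0.le hq1.le)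
  have hcast : (1 : ℂ) - (r : ℂ) * (q : ℂ) ^ k = ((1 - r * q ^ k : ℝ) : ℂ) := by
    push_cast; ring
  rw [hcast, Complex.norm_real, Real.norm_eq_abs, _root_.abs_of_nonneg (by linarith)]

lemma term_lb {q : ℝ} (hq0 : 0 < q) (c : ℂ) (k : ℕ) :
    1 - ‖c‖ * q ^ k ≤ ‖1 - c * (q : ℂ) ^ k‖ := by
  have h1 : ‖c * (q : ℂ) ^ k‖ = ‖c‖ * q ^ k := by
    rw [norm_mul, norm_pow, Complex.norm_real, Real.norm_eq_abs, _root_.abs_of_pos hq0]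
  calc 1 - ‖c‖ * q ^ k = ‖(1 : ℂ)‖ - ‖c * (q : ℂ) ^ k‖ := by rw [norm_one, h1]
    _ ≤ ‖1 - c * (q : ℂ) ^ k‖ := norm_sub_norm_le _ _

lemma tprod_nonneg' {f : ℕ → ℝ} (h0 : ∀ i, 0 ≤ f i) : 0 ≤ ∏' i, f i := by
  by_cases hf : Multipliable f
  · exact ge_of_tendsto' hf.hasProd fun s => Finset.prod_nonneg fun i _ => h0 i
  · rw [tprod_eq_one_of_not_multipliable hf]; norm_num

lemma tprod_le_tprod' {f g : ℕ → ℝ} (h0 : ∀ i, 0 ≤ f i) (h : ∀ i, f i ≤ g i)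
    (hf : Multipliable f) (hg : Multipliable g) : ∏' i, f i ≤ ∏' i, g i :=
  le_of_tendsto_of_tendsto' hf.hasProd hg.hasProd fun s =>
    Finset.prod_le_prod (fun i _ => h0 i) (fun i _ => h i)

/-- For `q ∈ (0,1)`, `|a| ≤ 1` and `z = e^{iφ}`:
`|(az, az⁻¹; q)_∞| ≥ ((|a|;q)_∞)² ≥ (1-|a|)² ((q;q)_∞)²`. -/
theorem stmt5 (q : ℝ) (hq0 : 0 < q) (hq1 : q < 1) (a : ℂ) (ha : ‖a‖ ≤ 1) (φ : ℝ) :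
    (1 - ‖a‖) ^ 2 * (∏' k : ℕ, (1 - q ^ (k + 1))) ^ 2
        ≤ (∏' k : ℕ, (1 - ‖a‖ * q ^ k)) ^ 2 ∧
      (∏' k : ℕ, (1 - ‖a‖ * q ^ k)) ^ 2 ≤
        ‖((∏' k : ℕ, (1 - a * Complex.exp ((φ : ℂ) * Complex.I) * (q : ℂ) ^ k)) *
          ∏' k : ℕ, (1 - a * (Complex.exp ((φ : ℂ) * Complex.I))⁻¹ * (q : ℂ) ^ k))‖ := by
  set A := ‖a‖ with hA
  have hA0 : 0 ≤ A := norm_nonneg a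
  set z := Complex.exp ((φ : ℂ) * Complex.I) with hzdef
  have hz1 : ‖z‖ = 1 := Complex.norm_exp_ofReal_mul_I φ
  have hqk1 : ∀ k : ℕ, q ^ k ≤ 1 := fun k => pow_le_one₀ hq0.le hq1.le
  have hAq1 : ∀ k : ℕ, A * q ^ k ≤ 1 := fun k =>
    mul_le_one₀ ha (by positivity) (hqk1 k)
  -- multipliability facts
  have hMA : Multipliable (fun k : ℕ => (1 - A * q ^ k)) := mult_real hq0 hq1 hA0 ha
  have hMAt : Multipliable (fun k : ℕ => (1 - A * q ^ (k + 1))) := by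
    refine (mult_real hq0 hq1 (r := A * q) (by positivity)
      (mul_le_one₀ ha hq0.le hq1.le)).congr fun k => ?_
    rw [mul_assoc, ← pow_succ']
  have hMq : Multipliable (fun k : ℕ => (1 - q ^ (k + 1))) := by
    refine (mult_real hq0 hq1 (r := q) hq0.le hq1.le).congr fun k => ?_
    rw [← pow_succ']
  constructor
  · -- first inequality
    have hsplit : (∏' k : ℕ, (1 - A * q ^ k)) = (1 - A) * ∏' k : ℕ, (1 - A * q ^ (k + 1)) := by
      have h := tprod_eq_zero_mul' (f := fun k : ℕ => (1 - A * q ^ k)) hMAt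
      simp only [pow_zero, mul_one] at h
      exact h
    have h1 : (∏' k : ℕ, (1 - q ^ (k + 1))) ≤ ∏' k : ℕ, (1 - A * q ^ (k + 1)) := by
      refine tprod_le_tprod' (fun k => by linarith [hqk1 (k+1), pow_nonneg hq0.le (k+1)])
        (fun k => ?_) hMq hMAt
      have := mul_le_of_le_one_left (pow_nonneg hq0.le (k+1)) ha
      linarith
    have hQ0 : 0 ≤ ∏' k : ℕ, (1 - q ^ (k + 1)) :=
      tprod_nonneg' fun k => by linarith [hqk1 (k+1)]
    have hkey : (1 - A) * (∏' k : ℕ, (1 - q ^ (k + 1)))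
        ≤ ∏' k : ℕ, (1 - A * q ^ k) := by
      rw [hsplit]
      exact mul_le_mul_of_nonneg_left h1 (by linarith)
    calc (1 - A) ^ 2 * (∏' k : ℕ, (1 - q ^ (k + 1))) ^ 2
        = ((1 - A) * ∏' k : ℕ, (1 - q ^ (k + 1))) ^ 2 := by rw [mul_pow]
      _ ≤ (∏' k : ℕ, (1 - A * q ^ k)) ^ 2 := by
          apply pow_le_pow_left₀ (mul_nonneg (by linarith) hQ0) hkey
  · -- second inequality
    have hc1 : ‖a * z‖ ≤ 1 := by rw [norm_mul, hz1, mul_one]; exact ha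
    have hc2 : ‖a * z⁻¹‖ ≤ 1 := by
      rw [norm_mul, norm_inv, hz1, inv_one, mul_one]; exact ha
    have hM1 : Multipliable (fun k : ℕ => (1 - a * z * (q : ℂ) ^ k)) :=
      mult_aux hq0 hq1 (a * z) hc1
    have hM2 : Multipliable (fun k : ℕ => (1 - a * z⁻¹ * (q : ℂ) ^ k)) :=
      mult_aux hq0 hq1 (a * z⁻¹) hc2
    have hL : (∏' k : ℕ, (1 - A * q ^ k)) ≤ ‖∏' k : ℕ, (1 - a * z * (q : ℂ) ^ k)‖ := by
      rw [hM1.norm_tprod]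
      refine tprod_le_tprod' (fun k => by linarith [hAq1 k]) (fun k => ?_) hMA hM1.norm
      have h := term_lb hq0 (a * z) k
      rwa [norm_mul, hz1, mul_one] at h
    have hR : (∏' k : ℕ, (1 - A * q ^ k)) ≤ ‖∏' k : ℕ, (1 - a * z⁻¹ * (q : ℂ) ^ k)‖ := by
      rw [hM2.norm_tprod]
      refine tprod_le_tprod' (fun k => by linarith [hAq1 k]) (fun k => ?_) hMA hM2.norm
      have h := term_lb hq0 (a * z⁻¹) k
      rwa [norm_mul, norm_inv, hz1, inv_one, mul_one] at h
    have hP0 : 0 ≤ ∏' k : ℕ, (1 - A * q ^ k) := tprod_nonneg' fun k => by linarith [hAq1 k]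
    rw [norm_mul, pow_two]
    exact mul_le_mul hL hR hP0 (norm_nonneg _)
end

section
/- F(Ã,C̃) converges to 3/2 as Ã and C̃ tend to infinity jointly: for every ε > 0 there exists M > 0 such that for all Ã ≥ M and C̃ ≥ M, |F(Ã,C̃) − 3/2| < ε. -/
open MeasureTheory Filter Real Topology
open scoped ENNReal

lemma aux_hI (n : ℕ) : Integrable (fun x : ℝ => Real.exp (-x^2/4) * x^n) := by
  have h := integrable_rpow_mul_exp_neg_mul_sq (b := (1/4:ℝ)) (by norm_num)
    (s := (n:ℝ)) (lt_of_lt_of_le neg_one_lt_zero (Nat.cast_nonneg n))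
  refine h.congr (Filter.Eventually.of_forall fun x => ?_)
  simp only []
  rw [Real.rpow_natCast, show -(1/4:ℝ) * x^2 = -x^2/4 by ring]
  ring

lemma aux_hderiv (x : ℝ) : HasDerivAt (fun x : ℝ => x^3 * Real.exp (-x^2/4))
    (Real.exp (-x^2/4) * (3*x^2 - x^4/2)) x := by
  have h1 : HasDerivAt (fun x : ℝ => -x^2/4) (-x/2) x := by
    have := ((hasDerivAt_pow 2 x).neg).div_const 4
    refine this.congr_deriv ?_
    norm_num
    ring
  have h2 := h1.exp
  have h3 := (hasDerivAt_pow 3 x).mul h2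
  refine h3.congr_deriv ?_
  norm_num
  ring

lemma aux_hfint : Integrable (fun x : ℝ => Real.exp (-x^2/4) * (3*x^2 - x^4/2)) := by
  have := ((aux_hI 2).const_mul 3).sub ((aux_hI 4).div_const 2)
  refine this.congr (Filter.Eventually.of_forall fun x => ?_)
  simp only [Pi.sub_apply]
  ring

lemma aux_htop : Tendsto (fun x : ℝ => x^3 * Real.exp (-x^2/4)) atTop (𝓝 0) := by
  have h0 : Tendsto (fun t : ℝ => t^2 * Real.exp (-t)) atTop (𝓝 0) :=
    tendsto_pow_mul_exp_neg_atTop_nhds_zero 2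
  have hq : Tendsto (fun x : ℝ => x^2/4) atTop atTop :=
    (tendsto_pow_atTop two_ne_zero).atTop_div_const (by norm_num)
  have hcomp : Tendsto (fun x : ℝ => 16 * ((x^2/4)^2 * Real.exp (-(x^2/4)))) atTop (𝓝 (16 * 0)) :=
    (h0.comp hq).const_mul 16
  rw [mul_zero] at hcomp
  refine squeeze_zero' ?_ ?_ hcomp
  · filter_upwards [eventually_ge_atTop (0:ℝ)] with x hx
    positivity
  · filter_upwards [eventually_ge_atTop (1:ℝ)] with x hx
    have h1 : x^3 ≤ x^4 := pow_le_pow_right₀ hx (by norm_num)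
    have h2 : (0:ℝ) < Real.exp (-x^2/4) := Real.exp_pos _
    calc x^3 * Real.exp (-x^2/4) ≤ x^4 * Real.exp (-x^2/4) := by nlinarith
    _ = 16 * ((x^2/4)^2 * Real.exp (-(x^2/4))) := by rw [show -(x^2/4) = -x^2/4 by ring]; ring

lemma aux_hbot : Tendsto (fun x : ℝ => x^3 * Real.exp (-x^2/4)) atBot (𝓝 0) := by
  have h := (aux_htop.comp tendsto_neg_atBot_atTop).neg
  rw [neg_zero] at h
  refine h.congr fun x => ?_
  simp only [Function.comp_apply]
  ring_nf

lemma aux_key : (∫ x : ℝ, Real.exp (-x^2/4) * x^4) = 6 * ∫ x : ℝ, Real.exp (-x^2/4) * x^2 := by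
  have hIoi := integral_Ioi_of_hasDerivAt_of_tendsto' (a := 0)
    (fun x _ => aux_hderiv x) aux_hfint.integrableOn aux_htop
  have hIic := integral_Iic_of_hasDerivAt_of_tendsto' (a := 0)
    (fun x _ => aux_hderiv x) aux_hfint.integrableOn aux_hbot
  have htot := intervalIntegral.integral_Iic_add_Ioi (b := (0:ℝ)) (f := fun x : ℝ => Real.exp (-x^2/4) * (3*x^2 - x^4/2))
    aux_hfint.integrableOn aux_hfint.integrableOn
  rw [hIoi, hIic] at htot
  norm_num at htot
  -- htot : ∫ x, exp(-x²/4)*(3x² - x⁴/2) = 0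
  have hsub : (∫ x : ℝ, Real.exp (-x^2/4) * (3*x^2 - x^4/2))
      = 3 * (∫ x : ℝ, Real.exp (-x^2/4) * x^2) - (∫ x : ℝ, Real.exp (-x^2/4) * x^4)/2 := by
    rw [show (fun x : ℝ => Real.exp (-x^2/4) * (3*x^2 - x^4/2))
        = fun x : ℝ => 3 * (Real.exp (-x^2/4) * x^2) - (Real.exp (-x^2/4) * x^4)/2 by
      funext x; push_cast; ring]
    rw [integral_sub (((aux_hI 2).const_mul 3)) ((aux_hI 4).div_const 2), integral_const_mul,
      integral_div]
  rw [hsub] at htot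
  linarith

lemma aux_pos2 : 0 < ∫ x : ℝ, Real.exp (-x^2/4) * x^2 := by
  rw [integral_pos_iff_support_of_nonneg (fun x => by positivity) (aux_hI 2)]
  have hsub : Set.Ioi (0:ℝ) ⊆ Function.support (fun x : ℝ => Real.exp (-x^2/4) * x^2) := by
    intro x hx
    simp only [Function.mem_support]
    have : (0:ℝ) < x := hx
    positivity
  calc (0:ℝ≥0∞) < ⊤ := by simp
  _ = MeasureTheory.volume (Set.Ioi (0:ℝ)) := by rw [Real.volume_Ioi]
  _ ≤ _ := measure_mono hsub

lemma aux_ratio_tendsto (x : ℝ) : Tendsto (fun t : ℝ => t^2/(x^2+t^2)) atTop (𝓝 1) := by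
  have hd : Tendsto (fun t : ℝ => x^2+t^2) atTop atTop :=
    tendsto_atTop_add_const_left _ _ (tendsto_pow_atTop two_ne_zero)
  have h0 : Tendsto (fun t : ℝ => x^2/(x^2+t^2)) atTop (𝓝 0) :=
    Tendsto.div_atTop tendsto_const_nhds hd
  have h1 := (tendsto_const_nhds (x := (1:ℝ)) (f := atTop)).sub h0
  rw [sub_zero] at h1
  refine h1.congr' ?_
  filter_upwards [eventually_gt_atTop (0:ℝ)] with t ht
  have hden : x^2+t^2 ≠ 0 := by positivity
  field_simp
  ring

lemma aux_tendstoAux (n : ℕ) :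
    Tendsto (fun p : ℝ × ℝ => ∫ x : ℝ,
      p.1^2 * p.2^2 * (Real.exp (-x^2/4) * x^n / ((x^2+p.1^2)*(x^2+p.2^2))))
      (atTop ×ˢ atTop) (𝓝 (∫ x : ℝ, Real.exp (-x^2/4) * x^n)) := by
  have hev1 : ∀ᶠ p : ℝ × ℝ in atTop ×ˢ atTop, 1 ≤ p.1 ∧ 1 ≤ p.2 :=
    (eventually_ge_atTop 1).prod_mk (eventually_ge_atTop 1)
  apply tendsto_integral_filter_of_dominated_convergence
    (bound := fun x : ℝ => |Real.exp (-x^2/4) * x^n|)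
  · refine Filter.Eventually.of_forall fun p => ?_
    apply Measurable.aestronglyMeasurable
    fun_prop
  · filter_upwards [hev1] with p hp
    refine ae_of_all _ fun x => ?_
    obtain ⟨h1, h2⟩ := hp
    have hd1 : (0:ℝ) < x^2 + p.1^2 := by nlinarith
    have hd2 : (0:ℝ) < x^2 + p.2^2 := by nlinarith
    have hr1 : p.1^2/(x^2+p.1^2) ≤ 1 := (div_le_one hd1).2 (by nlinarith)
    have hr2 : p.2^2/(x^2+p.2^2) ≤ 1 := (div_le_one hd2).2 (by nlinarith)
    have hr1' : (0:ℝ) ≤ p.1^2/(x^2+p.1^2) := by positivity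
    have hr2' : (0:ℝ) ≤ p.2^2/(x^2+p.2^2) := by positivity
    have hk : p.1^2*p.2^2 * (Real.exp (-x^2/4) * x^n / ((x^2+p.1^2)*(x^2+p.2^2)))
        = (Real.exp (-x^2/4) * x^n) * (p.1^2/(x^2+p.1^2)) * (p.2^2/(x^2+p.2^2)) := by
      field_simp
    rw [Real.norm_eq_abs, hk, abs_mul, abs_mul, abs_of_nonneg hr1', abs_of_nonneg hr2']
    calc |Real.exp (-x^2/4) * x^n| * (p.1^2/(x^2+p.1^2)) * (p.2^2/(x^2+p.2^2))
        ≤ |Real.exp (-x^2/4) * x^n| * 1 * 1 := by gcongr <;> positivity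
    _ = |Real.exp (-x^2/4) * x^n| := by ring
  · exact (aux_hI n).abs
  · refine ae_of_all _ fun x => ?_
    have hlim := (((aux_ratio_tendsto x).comp tendsto_fst).mul
      ((aux_ratio_tendsto x).comp tendsto_snd)).const_mul (Real.exp (-x^2/4) * x^n)
    rw [mul_one, mul_one] at hlim
    refine hlim.congr fun p => ?_
    simp only [Function.comp_apply]
    rw [mul_assoc, div_mul_div_comm]
    ring

/-- `F(Ã,C̃) = (1/4)·(∫ e^{-x²/4} x⁴/((x²+Ã²)(x²+C̃²)) dx)/(∫ e^{-x²/4} x²/((x²+Ã²)(x²+C̃²)) dx)`. -/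
noncomputable def Fint (A C : ℝ) : ℝ :=
  (1 / 4) * (∫ x : ℝ, Real.exp (-x ^ 2 / 4) * x ^ 4 / ((x ^ 2 + A ^ 2) * (x ^ 2 + C ^ 2))) /
    ∫ x : ℝ, Real.exp (-x ^ 2 / 4) * x ^ 2 / ((x ^ 2 + A ^ 2) * (x ^ 2 + C ^ 2))

/-- `F(Ã,C̃) → 3/2` as `Ã, C̃ → ∞` jointly. -/
theorem stmt10 : ∀ ε : ℝ, 0 < ε → ∃ M > (0 : ℝ), ∀ A C : ℝ, M ≤ A → M ≤ C →
    |Fint A C - 3 / 2| < ε := by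
  intro ε hε
  have hL2ne : (∫ x : ℝ, Real.exp (-x^2/4) * x^2) ≠ 0 := ne_of_gt aux_pos2
  have hG : Tendsto (fun p : ℝ × ℝ =>
      1/4 * (∫ x : ℝ, p.1^2 * p.2^2 * (Real.exp (-x^2/4) * x^4 / ((x^2+p.1^2)*(x^2+p.2^2)))) /
        (∫ x : ℝ, p.1^2 * p.2^2 * (Real.exp (-x^2/4) * x^2 / ((x^2+p.1^2)*(x^2+p.2^2)))))
      (atTop ×ˢ atTop)
      (𝓝 (1/4 * (∫ x : ℝ, Real.exp (-x^2/4) * x^4) / (∫ x : ℝ, Real.exp (-x^2/4) * x^2))) :=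
    ((aux_tendstoAux 4).const_mul (1/4)).div (aux_tendstoAux 2) hL2ne
  have hval : 1/4 * (∫ x : ℝ, Real.exp (-x^2/4) * x^4) / (∫ x : ℝ, Real.exp (-x^2/4) * x^2)
      = 3/2 := by
    rw [aux_key, ← mul_assoc, mul_div_assoc, div_self hL2ne]
    norm_num
  rw [hval, Metric.tendsto_nhds] at hG
  have hev1 : ∀ᶠ p : ℝ × ℝ in atTop ×ˢ atTop, 1 ≤ p.1 ∧ 1 ≤ p.2 :=
    (eventually_ge_atTop 1).prod_mk (eventually_ge_atTop 1)
  have heq : ∀ᶠ p : ℝ × ℝ in atTop ×ˢ atTop, |Fint p.1 p.2 - 3/2| < ε := by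
    filter_upwards [hG ε hε, hev1] with p h' hp
    rw [Real.dist_eq] at h'
    have hc : p.1^2 * p.2^2 ≠ 0 := by
      have h1 : (0:ℝ) < p.1 := lt_of_lt_of_le one_pos hp.1
      have h2 : (0:ℝ) < p.2 := lt_of_lt_of_le one_pos hp.2
      positivity
    have hF : Fint p.1 p.2
        = 1/4 * (∫ x : ℝ, p.1^2 * p.2^2 * (Real.exp (-x^2/4) * x^4 / ((x^2+p.1^2)*(x^2+p.2^2)))) /
          (∫ x : ℝ, p.1^2 * p.2^2 * (Real.exp (-x^2/4) * x^2 / ((x^2+p.1^2)*(x^2+p.2^2)))) := by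
      rw [Fint, integral_const_mul, integral_const_mul,
        show (1:ℝ)/4 * (p.1^2 * p.2^2 * ∫ x : ℝ,
            Real.exp (-x^2/4) * x^4 / ((x^2+p.1^2)*(x^2+p.2^2)))
          = p.1^2 * p.2^2 * (1/4 * ∫ x : ℝ,
            Real.exp (-x^2/4) * x^4 / ((x^2+p.1^2)*(x^2+p.2^2))) by ring,
        mul_div_mul_left _ _ hc]
    rw [hF]
    exact h'
  rw [Filter.eventually_prod_iff] at heq
  obtain ⟨pa, hpa, pb, hpb, h⟩ := heq
  rw [eventually_atTop] at hpa hpb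
  obtain ⟨M1, hM1⟩ := hpa
  obtain ⟨M2, hM2⟩ := hpb
  refine ⟨max 1 (max M1 M2), lt_of_lt_of_le one_pos (le_max_left _ _), fun A C hA hC => ?_⟩
  exact h (hM1 A (le_trans (le_trans (le_max_left _ _) (le_max_right _ _)) hA))
    (hM2 C (le_trans (le_trans (le_max_right _ _) (le_max_right _ _)) hC))
end

section
/- For every ε ∈ (0,1) there exist constants c₀, C₀, C₁ > 0, depending only on ε, such that for every q ∈ (ε,1), every n ∈ ℤ and every real x > C₁/(1−q): ν^{(n)}({η : η(y) = 1 for some integer y < n − x/(1−q)}) ≤ C₀·e^{−c₀·x} and ν^{(n)}({η : η(y′) = 0 for some integer y′ > n + x/(1−q)}) ≤ C₀·e^{−c₀·x}. -/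
open MeasureTheory ProbabilityTheory

/-- `A_n`: configurations `η ∈ {0,1}^ℤ` for which `{i > n : η(i) = 0}` and
`{i ≤ n : η(i) = 1}` are finite sets of equal cardinality. -/
def blockingSet (n : ℤ) : Set (ℤ → Bool) :=
  {η | {i : ℤ | n < i ∧ η i = false}.Finite ∧ {i : ℤ | i ≤ n ∧ η i = true}.Finite ∧
    {i : ℤ | n < i ∧ η i = false}.ncard = {i : ℤ | i ≤ n ∧ η i = true}.ncard}

namespace Stmt15Aux

open Set

/-! ### Cylinder π-system -/

/-- the π-system of finite cylinders. -/
def cylSet : Set (Set (ℤ → Bool)) :=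
  {S | ∃ (t : Finset ℤ) (g : ℤ → Set Bool), S = ⋂ i ∈ t, (fun η : ℤ → Bool => η i) ⁻¹' g i}

lemma isPiSystem_cylSet : IsPiSystem cylSet := by
  rintro S₁ ⟨t₁, g₁, rfl⟩ S₂ ⟨t₂, g₂, rfl⟩ -
  refine ⟨t₁ ∪ t₂, fun i => (if i ∈ t₁ then g₁ i else univ) ∩ (if i ∈ t₂ then g₂ i else univ), ?_⟩
  ext η
  simp only [mem_inter_iff, mem_iInter, mem_preimage, Finset.mem_union]
  constructor
  · rintro ⟨h1, h2⟩ i hi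
    constructor
    · split_ifs with h; exact h1 i h; exact mem_univ _
    · split_ifs with h; exact h2 i h; exact mem_univ _
  · intro h
    constructor
    · intro i hi; have := (h i (Or.inl hi)).1; simpa [hi] using this
    · intro i hi; have := (h i (Or.inr hi)).2; simpa [hi] using this

lemma generateFrom_cylSet :
    MeasurableSpace.pi (m := fun _ : ℤ => (inferInstance : MeasurableSpace Bool))
      = MeasurableSpace.generateFrom cylSet := by
  apply le_antisymm
  · refine iSup_le fun i => ?_
    rintro S ⟨s', _, rfl⟩
    apply MeasurableSpace.measurableSet_generateFrom
    exact ⟨{i}, fun _ => s', by simp⟩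
  · rw [MeasurableSpace.generateFrom_le_iff]
    rintro S ⟨t, g, rfl⟩
    exact MeasurableSet.biInter t.countable_toSet fun i _ =>
      (by trivial : MeasurableSet (g i)).preimage (measurable_pi_apply i)

lemma cylSet_measurable {S : Set (ℤ → Bool)} (hS : S ∈ cylSet) : MeasurableSet S := by
  obtain ⟨t, g, rfl⟩ := hS
  exact MeasurableSet.biInter t.countable_toSet fun i _ =>
    (by trivial : MeasurableSet (g i)).preimage (measurable_pi_apply i)

lemma meas_cyl {ν : Measure (ℤ → Bool)}
    (hind : iIndepFun (fun i (η : ℤ → Bool) => η i) ν) (t : Finset ℤ) (g : ℤ → Set Bool) :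
    ν (⋂ i ∈ t, (fun η : ℤ → Bool => η i) ⁻¹' g i)
      = ∏ i ∈ t, ν ((fun η : ℤ → Bool => η i) ⁻¹' g i) :=
  (iIndepFun_iff_measure_inter_preimage_eq_mul.mp hind) t (fun _ _ => by trivial)

/-! ### The two-point flip map -/

/-- flip coordinates `y` and `z`. -/
def flip2 (y z : ℤ) (η : ℤ → Bool) : ℤ → Bool :=
  fun i => if i = y ∨ i = z then !η i else η i

lemma measurable_flip2 (y z : ℤ) : Measurable (flip2 y z) := by
  apply measurable_pi_lambda
  intro i
  exact (measurable_from_top (f := fun b : Bool => if i = y ∨ i = z then !b else b)).comp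
    (measurable_pi_apply i)

lemma flip2_involutive (y z : ℤ) : Function.Involutive (flip2 y z) := by
  intro η; funext i; simp only [flip2]; split_ifs <;> simp

def evt (i : ℤ) (b : Bool) : Set (ℤ → Bool) := (fun η : ℤ → Bool => η i) ⁻¹' {b}

lemma measurable_evt (i : ℤ) (b : Bool) : MeasurableSet (evt i b) :=
  (by trivial : MeasurableSet ({b} : Set Bool)).preimage (measurable_pi_apply i)

lemma subset_singleton_bool {S : Set Bool} {b : Bool} (h : S ⊆ {b}) : S = ∅ ∨ S = {b} := by
  rcases eq_empty_or_nonempty S with h0 | ⟨c, hc⟩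
  · exact Or.inl h0
  · right; apply le_antisymm h; intro d hd; simp at hd; subst hd; have := h hc; simpa using this ▸ hc

/-! ### Constraint systems for cylinders intersected with a two-point condition -/

/-- the combined constraint system for `cyl(t,g) ∩ evt y true ∩ evt z false`. -/
def Gc (y z : ℤ) (t : Finset ℤ) (g : ℤ → Set Bool) (i : ℤ) : Set Bool :=
  (if i ∈ t then g i else univ) ∩ (if i = y then {true} else univ) ∩
    (if i = z then {false} else univ)

/-- flipped constraints. -/
def Gc' (y z : ℤ) (t : Finset ℤ) (g : ℤ → Set Bool) (i : ℤ) : Set Bool :=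
  if i = y ∨ i = z then (fun b => !b) ⁻¹' (Gc y z t g i) else Gc y z t g i

lemma inter_eq_iInter (y z : ℤ) (t : Finset ℤ) (g : ℤ → Set Bool) :
    (evt y true ∩ evt z false) ∩ (⋂ i ∈ t, (fun η : ℤ → Bool => η i) ⁻¹' g i)
      = ⋂ i, (fun η : ℤ → Bool => η i) ⁻¹' Gc y z t g i := by
  ext η
  simp only [evt, Gc, mem_inter_iff, mem_preimage, mem_iInter, mem_singleton_iff]
  constructor
  · rintro ⟨⟨hy, hz⟩, ht⟩ i
    refine ⟨⟨?_, ?_⟩, ?_⟩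
    · split_ifs with h; exact ht i h; exact mem_univ _
    · split_ifs with h; · subst h; simpa using hy
      · exact mem_univ _
    · split_ifs with h; · subst h; simpa using hz
      · exact mem_univ _
  · intro h
    refine ⟨⟨?_, ?_⟩, ?_⟩
    · have := (h y).1.2; simpa using this
    · have := (h z).2; simpa using this
    · intro i hi
      have := (h i).1.1; simpa [hi] using this

lemma flip_preimage_iInter (y z : ℤ) (t : Finset ℤ) (g : ℤ → Set Bool) :
    (flip2 y z) ⁻¹' (⋂ i, (fun η : ℤ → Bool => η i) ⁻¹' Gc y z t g i)
      = ⋂ i, (fun η : ℤ → Bool => η i) ⁻¹' Gc' y z t g i := by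
  ext η
  simp only [mem_preimage, mem_iInter, flip2, Gc']
  refine forall_congr' fun i => ?_
  split_ifs with h <;> simp

lemma iInter_eq_biInter (G : ℤ → Set Bool) (t' : Finset ℤ)
    (hG : ∀ i, i ∉ t' → G i = univ) :
    (⋂ i, (fun η : ℤ → Bool => η i) ⁻¹' G i)
      = ⋂ i ∈ t', (fun η : ℤ → Bool => η i) ⁻¹' G i := by
  ext η
  simp only [mem_iInter, mem_preimage]
  constructor
  · intro h i _; exact h i
  · intro h i
    by_cases hi : i ∈ t'
    · exact h i hi
    · rw [hG i hi]; exact mem_univ _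

/-! ### The key change-of-variables identity for the two-point flip -/

variable {ν : Measure (ℤ → Bool)}

lemma flip_meas [IsProbabilityMeasure ν]
    (hind : iIndepFun (fun i (η : ℤ → Bool) => η i) ν)
    (y z : ℤ) (hyz : y ≠ z) (B : Set (ℤ → Bool)) (hB : MeasurableSet B) :
    ν ((evt y true ∩ evt z false) ∩ B) * (ν (evt y false) * ν (evt z true))
      = ν ((flip2 y z) ⁻¹' ((evt y true ∩ evt z false) ∩ B))
          * (ν (evt y true) * ν (evt z false)) := by
  haveI hνfin : IsFiniteMeasure ν := inferInstance
  set C : Set (ℤ → Bool) := evt y true ∩ evt z false with hC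
  have hCm : MeasurableSet C := (measurable_evt y true).inter (measurable_evt z false)
  set c₁ : ENNReal := ν (evt y false) * ν (evt z true) with hc₁
  set c₂ : ENNReal := ν (evt y true) * ν (evt z false) with hc₂
  set κ₁ : Measure (ℤ → Bool) := c₁ • ν.restrict C with hκ₁
  set κ₂ : Measure (ℤ → Bool) := c₂ • (ν.map (flip2 y z)).restrict C with hκ₂
  haveI hmapP : IsProbabilityMeasure (ν.map (flip2 y z)) :=
    MeasureTheory.Measure.isProbabilityMeasure_map (μ := ν) (measurable_flip2 y z).aemeasurable
  have hc₁top : c₁ ≠ ⊤ := by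
    rw [hc₁]; exact ENNReal.mul_ne_top (measure_ne_top ν _) (measure_ne_top ν _)
  have hc₂top : c₂ ≠ ⊤ := by
    rw [hc₂]; exact ENNReal.mul_ne_top (measure_ne_top ν _) (measure_ne_top ν _)
  haveI : IsFiniteMeasure κ₁ := by
    refine ⟨?_⟩
    rw [hκ₁, Measure.smul_apply, smul_eq_mul, Measure.restrict_apply_univ]
    exact ENNReal.mul_lt_top hc₁top.lt_top (measure_lt_top ν C)
  haveI : IsFiniteMeasure κ₂ := by
    refine ⟨?_⟩
    rw [hκ₂, Measure.smul_apply, smul_eq_mul, Measure.restrict_apply_univ]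
    exact ENNReal.mul_lt_top hc₂top.lt_top (measure_lt_top _ C)
  -- the key computation on cylinders
  have key : ∀ S ∈ cylSet, κ₁ S = κ₂ S := by
    rintro S ⟨t, g, rfl⟩
    have hSm : MeasurableSet (⋂ i ∈ t, (fun η : ℤ → Bool => η i) ⁻¹' g i) :=
      cylSet_measurable ⟨t, g, rfl⟩
    set t₀ : Finset ℤ := (t.erase y).erase z with ht₀
    have hyt : y ∉ insert z t₀ := by
      simp [ht₀, hyz]
    have hzt : z ∉ t₀ := by simp [ht₀]
    have hGuniv : ∀ i, i ∉ insert y (insert z t₀) → Gc y z t g i = univ := by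
      intro i hi
      simp only [Finset.mem_insert, ht₀, Finset.mem_erase] at hi
      push_neg at hi
      obtain ⟨hiy, hiz, hit⟩ := hi
      have : i ∉ t := fun h => hit hiz hiy h
      simp [Gc, this, hiy, hiz]
    have hG'univ : ∀ i, i ∉ insert y (insert z t₀) → Gc' y z t g i = univ := by
      intro i hi
      have h1 := hGuniv i hi
      simp only [Finset.mem_insert] at hi
      push_neg at hi
      simp [Gc', hi.1, hi.2.1, h1]
    have hG'eq : ∀ i ∈ t₀, Gc' y z t g i = Gc y z t g i := by
      intro i hi
      simp only [ht₀, Finset.mem_erase] at hi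
      simp [Gc', hi.1, hi.2.1]
    -- measure values
    have e₁ : κ₁ (⋂ i ∈ t, (fun η : ℤ → Bool => η i) ⁻¹' g i)
        = c₁ * ν (⋂ i ∈ insert y (insert z t₀), (fun η : ℤ → Bool => η i) ⁻¹' Gc y z t g i) := by
      rw [hκ₁, Measure.smul_apply, smul_eq_mul, Measure.restrict_apply hSm, Set.inter_comm,
        inter_eq_iInter, iInter_eq_biInter _ _ hGuniv]
    have e₂ : κ₂ (⋂ i ∈ t, (fun η : ℤ → Bool => η i) ⁻¹' g i)
        = c₂ * ν (⋂ i ∈ insert y (insert z t₀), (fun η : ℤ → Bool => η i) ⁻¹' Gc' y z t g i) := by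
      rw [hκ₂, Measure.smul_apply, smul_eq_mul, Measure.restrict_apply hSm,
        Measure.map_apply (measurable_flip2 y z) (hSm.inter hCm), Set.inter_comm,
        inter_eq_iInter, flip_preimage_iInter, iInter_eq_biInter _ _ hG'univ]
    rw [e₁, e₂, meas_cyl hind, meas_cyl hind, Finset.prod_insert hyt, Finset.prod_insert hyt,
      Finset.prod_insert hzt, Finset.prod_insert hzt]
    have hR : ∏ i ∈ t₀, ν ((fun η : ℤ → Bool => η i) ⁻¹' Gc' y z t g i)
        = ∏ i ∈ t₀, ν ((fun η : ℤ → Bool => η i) ⁻¹' Gc y z t g i) :=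
      Finset.prod_congr rfl fun i hi => by rw [hG'eq i hi]
    rw [hR]
    -- classify Gy, Gz
    have hGy : Gc y z t g y ⊆ {true} := by
      simp only [Gc, if_pos rfl, if_neg hyz]
      intro b hb; exact hb.1.2
    have hGz : Gc y z t g z ⊆ {false} := by
      simp only [Gc, if_pos rfl, if_neg (Ne.symm hyz)]
      intro b hb; exact hb.2
    have hGy' : Gc' y z t g y = (fun b => !b) ⁻¹' Gc y z t g y := by
      simp [Gc']
    have hGz' : Gc' y z t g z = (fun b => !b) ⁻¹' Gc y z t g z := by
      simp [Gc']
    rcases subset_singleton_bool hGy with hy0 | hy1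
    · rw [hy0] at hGy' ⊢
      have : (fun b => !b) ⁻¹' (∅ : Set Bool) = ∅ := by simp
      rw [hGy', this]
      simp
    rcases subset_singleton_bool hGz with hz0 | hz1
    · rw [hz0] at hGz' ⊢
      have : (fun b => !b) ⁻¹' (∅ : Set Bool) = ∅ := by simp
      rw [hGz', this]
      simp [mul_comm, mul_left_comm, mul_assoc]
    · rw [hy1] at hGy' ⊢
      rw [hz1] at hGz' ⊢
      have h1 : (fun b => !b) ⁻¹' ({true} : Set Bool) = {false} := by
        ext b; cases b <;> simp
      have h2 : (fun b => !b) ⁻¹' ({false} : Set Bool) = {true} := by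
        ext b; cases b <;> simp
      rw [hGy', hGz', h1, h2]
      show c₁ * (ν (evt y true) * (ν (evt z false) * _))
        = c₂ * (ν (evt y false) * (ν (evt z true) * _))
      rw [hc₁, hc₂]; ring
  have huniv : κ₁ univ = κ₂ univ := by
    have : (univ : Set (ℤ → Bool)) ∈ cylSet := ⟨∅, fun _ => univ, by simp⟩
    exact key univ this
  have hκeq : κ₁ = κ₂ :=
    ext_of_generate_finite cylSet generateFrom_cylSet isPiSystem_cylSet key huniv
  have h1 : κ₁ B = ν (C ∩ B) * c₁ := by
    rw [hκ₁, Measure.smul_apply, smul_eq_mul, Measure.restrict_apply hB, Set.inter_comm, mul_comm]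
  have h2 : κ₂ B = ν ((flip2 y z) ⁻¹' (C ∩ B)) * c₂ := by
    rw [hκ₂, Measure.smul_apply, smul_eq_mul, Measure.restrict_apply hB,
      Measure.map_apply (measurable_flip2 y z) (hB.inter hCm), Set.inter_comm, mul_comm]
  rw [← h1, ← h2, hκeq]

/-! ### Measurability of the blocking set -/

/-- constraint sets used to show `blockingSet` is measurable. -/
def Kset (n : ℤ) (T T' : Finset ℤ) (i : ℤ) : Set Bool :=
  {b | (n < i → ((b = false) ↔ i ∈ T)) ∧ (i ≤ n → ((b = true) ↔ i ∈ T'))}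

def Mset (n : ℤ) (T T' : Finset ℤ) : Set (ℤ → Bool) :=
  ⋂ i, (fun η : ℤ → Bool => η i) ⁻¹' (Kset n T T' i)

lemma blockingSet_eq (n : ℤ) :
    blockingSet n = ⋃ (T : Finset ℤ) (T' : Finset ℤ) (_ : (T : Set ℤ) ⊆ Ioi n)
      (_ : (T' : Set ℤ) ⊆ Iic n) (_ : T.card = T'.card), Mset n T T' := by
  ext η
  simp only [mem_iUnion]
  constructor
  · rintro ⟨h1, h2, h3⟩
    refine ⟨h1.toFinset, h2.toFinset, ?_, ?_, ?_, ?_⟩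
    · intro i hi; simp only [Finite.coe_toFinset, mem_setOf_eq] at hi; exact hi.1
    · intro i hi; simp only [Finite.coe_toFinset, mem_setOf_eq] at hi; exact hi.1
    · rw [← Set.ncard_eq_toFinset_card _ h1, ← Set.ncard_eq_toFinset_card _ h2]; exact h3
    · refine mem_iInter.mpr fun i => ?_
      simp only [mem_preimage, Kset, Finite.mem_toFinset, mem_setOf_eq]
      exact ⟨fun hni => ⟨fun hv => ⟨hni, hv⟩, fun h => h.2⟩,
        fun hni => ⟨fun hv => ⟨hni, hv⟩, fun h => h.2⟩⟩
  · rintro ⟨T, T', hT, hT', hcard, hM⟩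
    have hmem : ∀ i, (n < i → (η i = false ↔ i ∈ T)) ∧ (i ≤ n → (η i = true ↔ i ∈ T')) := by
      intro i
      have := mem_iInter.mp hM i
      simpa [Kset] using this
    have e1 : {i : ℤ | n < i ∧ η i = false} = (T : Set ℤ) := by
      ext i
      simp only [mem_setOf_eq, Finset.coe_sort_coe, Finset.mem_coe]
      constructor
      · rintro ⟨hni, hv⟩; exact ((hmem i).1 hni).mp hv
      · intro hi
        have hni : n < i := hT hi
        exact ⟨hni, ((hmem i).1 hni).mpr hi⟩
    have e2 : {i : ℤ | i ≤ n ∧ η i = true} = (T' : Set ℤ) := by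
      ext i
      simp only [mem_setOf_eq, Finset.coe_sort_coe, Finset.mem_coe]
      constructor
      · rintro ⟨hni, hv⟩; exact ((hmem i).2 hni).mp hv
      · intro hi
        have hni : i ≤ n := hT' hi
        exact ⟨hni, ((hmem i).2 hni).mpr hi⟩
    refine ⟨e1 ▸ T.finite_toSet, e2 ▸ T'.finite_toSet, ?_⟩
    rw [e1, e2, ncard_coe_finset, ncard_coe_finset]
    exact hcard

lemma measurable_blockingSet (n : ℤ) : MeasurableSet (blockingSet n) := by
  rw [blockingSet_eq]
  refine MeasurableSet.iUnion fun T => MeasurableSet.iUnion fun T' => ?_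
  refine MeasurableSet.iUnion fun _ => MeasurableSet.iUnion fun _ =>
    MeasurableSet.iUnion fun _ => ?_
  exact MeasurableSet.iInter fun i =>
    (by trivial : MeasurableSet (Kset n T T' i)).preimage (measurable_pi_apply i)

/-! ### The flip map preserves the blocking set -/

lemma flip_mem_blockingSet {n y z : ℤ} (hy : y ≤ n) (hz : n < z) {η : ℤ → Bool}
    (hη : η ∈ blockingSet n) (hηy : η y = true) (hηz : η z = false) :
    flip2 y z η ∈ blockingSet n := by
  obtain ⟨h1, h2, h3⟩ := hη
  have c1 : {i : ℤ | n < i ∧ flip2 y z η i = false} = {i : ℤ | n < i ∧ η i = false} \ {z} := by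
    ext i
    simp only [mem_setOf_eq, mem_diff, mem_singleton_iff, flip2]
    constructor
    · rintro ⟨hni, hval⟩
      by_cases hiz : i = z
      · subst hiz; rw [if_pos (Or.inr rfl), hηz] at hval; simp at hval
      · have hiy : i ≠ y := by omega
        rw [if_neg (by tauto)] at hval
        exact ⟨⟨hni, hval⟩, hiz⟩
    · rintro ⟨⟨hni, hval⟩, hiz⟩
      have hiy : i ≠ y := by omega
      exact ⟨hni, by rw [if_neg (by tauto)]; exact hval⟩
  have c2 : {i : ℤ | i ≤ n ∧ flip2 y z η i = true} = {i : ℤ | i ≤ n ∧ η i = true} \ {y} := by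
    ext i
    simp only [mem_setOf_eq, mem_diff, mem_singleton_iff, flip2]
    constructor
    · rintro ⟨hni, hval⟩
      by_cases hiy : i = y
      · subst hiy; rw [if_pos (Or.inl rfl), hηy] at hval; simp at hval
      · have hiz : i ≠ z := by omega
        rw [if_neg (by tauto)] at hval
        exact ⟨⟨hni, hval⟩, hiy⟩
    · rintro ⟨⟨hni, hval⟩, hiy⟩
      have hiz : i ≠ z := by omega
      exact ⟨hni, by rw [if_neg (by tauto)]; exact hval⟩
  have hzmem : z ∈ {i : ℤ | n < i ∧ η i = false} := ⟨hz, hηz⟩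
  have hymem : y ∈ {i : ℤ | i ≤ n ∧ η i = true} := ⟨hy, hηy⟩
  refine ⟨c1 ▸ h1.diff, c2 ▸ h2.diff, ?_⟩
  rw [c1, c2, Set.ncard_diff_singleton_of_mem hzmem,
    Set.ncard_diff_singleton_of_mem hymem, h3]

/-! ### Marginals -/

lemma evt_true_eq (i : ℤ) : evt i true = {η : ℤ → Bool | η i = true} := rfl

lemma evt_false_eq_compl (i : ℤ) : evt i false = (evt i true)ᶜ := by
  ext η; simp [evt]

variable {q : ℝ}

lemma meas_evt_true [IsProbabilityMeasure ν]
    (hmarg : ∀ x : ℤ, ν {η | η x = true} = ENNReal.ofReal (q ^ (-x) / (1 + q ^ (-x))))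
    (i : ℤ) : ν (evt i true) = ENNReal.ofReal (q ^ (-i) / (1 + q ^ (-i))) := by
  rw [evt_true_eq]; exact hmarg i

lemma meas_evt_false [IsProbabilityMeasure ν] (hq0 : 0 < q)
    (hmarg : ∀ x : ℤ, ν {η | η x = true} = ENNReal.ofReal (q ^ (-x) / (1 + q ^ (-x))))
    (i : ℤ) : ν (evt i false) = ENNReal.ofReal (1 / (1 + q ^ (-i))) := by
  have hpow : (0:ℝ) < q ^ (-i) := zpow_pos hq0 _
  have hden : (0:ℝ) < 1 + q ^ (-i) := by linarith
  have hsum : ν (evt i true) + ν (evt i false) = 1 := by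
    rw [evt_false_eq_compl, measure_add_measure_compl (measurable_evt i true), measure_univ]
  rw [meas_evt_true hmarg] at hsum
  have harith : ENNReal.ofReal (q ^ (-i) / (1 + q ^ (-i))) + ENNReal.ofReal (1 / (1 + q ^ (-i)))
      = 1 := by
    rw [← ENNReal.ofReal_add (by positivity) (by positivity)]
    rw [← add_div]
    rw [show q ^ (-i) + 1 = 1 + q ^ (-i) by ring, div_self hden.ne', ENNReal.ofReal_one]
  have := harith.trans hsum.symm
  exact (ENNReal.add_right_inj (by simp [ENNReal.ofReal_ne_top])).mp this.symm

/-! ### Core estimate -/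

lemma core_bound [IsProbabilityMeasure ν] (hq0 : 0 < q)
    (hind : iIndepFun (fun i (η : ℤ → Bool) => η i) ν)
    (hmarg : ∀ x : ℤ, ν {η | η x = true} = ENNReal.ofReal (q ^ (-x) / (1 + q ^ (-x))))
    {n y z : ℤ} (hy : y ≤ n) (hz : n < z) :
    ν (blockingSet n ∩ (evt y true ∩ evt z false))
      ≤ ENNReal.ofReal (q ^ (z - y)) * ν (blockingSet n) := by
  have hyz : y ≠ z := by omega
  have key := flip_meas hind y z hyz (blockingSet n) (measurable_blockingSet n)
  have hsub : (flip2 y z) ⁻¹' ((evt y true ∩ evt z false) ∩ blockingSet n)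
      ⊆ blockingSet n := by
    intro η hη
    obtain ⟨⟨hy1, hz1⟩, hB⟩ := hη
    have hy1' : flip2 y z η y = true := hy1
    have hz1' : flip2 y z η z = false := hz1
    have := flip_mem_blockingSet hy hz hB hy1' hz1'
    rwa [flip2_involutive y z η] at this
  have hpowy : (0:ℝ) < q ^ (-y) := zpow_pos hq0 _
  have hpowz : (0:ℝ) < q ^ (-z) := zpow_pos hq0 _
  have hdeny : (0:ℝ) < 1 + q ^ (-y) := by linarith
  have hdenz : (0:ℝ) < 1 + q ^ (-z) := by linarith
  set c : ENNReal := ν (evt y false) * ν (evt z true) with hc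
  have hc0 : c ≠ 0 := by
    rw [hc, meas_evt_false hq0 hmarg, meas_evt_true hmarg]
    refine mul_ne_zero ?_ ?_ <;>
      · exact (ENNReal.ofReal_pos.mpr (by positivity)).ne'
  have hctop : c ≠ ⊤ := ENNReal.mul_ne_top (measure_ne_top ν _) (measure_ne_top ν _)
  have hratio : ν (evt y true) * ν (evt z false)
      = ENNReal.ofReal (q ^ (z - y)) * c := by
    rw [hc, meas_evt_true hmarg, meas_evt_false hq0 hmarg, meas_evt_false hq0 hmarg,
      meas_evt_true hmarg, ← ENNReal.ofReal_mul (by positivity), ← ENNReal.ofReal_mul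
      (by positivity), ← ENNReal.ofReal_mul (by positivity)]
    congr 1
    rw [show (z - y) = (-y) + -(-z) by ring, zpow_add₀ hq0.ne', zpow_neg]
    field_simp
    rw [← zpow_add₀ hq0.ne']; simp
  have hmono : ν ((flip2 y z) ⁻¹' ((evt y true ∩ evt z false) ∩ blockingSet n))
      ≤ ν (blockingSet n) := measure_mono hsub
  have step : ν ((evt y true ∩ evt z false) ∩ blockingSet n) * c
      ≤ (ENNReal.ofReal (q ^ (z - y)) * ν (blockingSet n)) * c := by
    rw [key, hratio]
    calc ν ((flip2 y z) ⁻¹' ((evt y true ∩ evt z false) ∩ blockingSet n))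
        * (ENNReal.ofReal (q ^ (z - y)) * c)
        ≤ ν (blockingSet n) * (ENNReal.ofReal (q ^ (z - y)) * c) :=
          mul_le_mul_left hmono _
      _ = ENNReal.ofReal (q ^ (z - y)) * ν (blockingSet n) * c := by ring
  rw [Set.inter_comm]
  exact (ENNReal.mul_le_mul_iff_left hc0 hctop).mp step

/-! ### Summation over covering families -/

lemma side_bound [IsProbabilityMeasure ν] (hq0 : 0 < q) (hq1 : q < 1)
    (hind : iIndepFun (fun i (η : ℤ → Bool) => η i) ν)
    (hmarg : ∀ x : ℤ, ν {η | η x = true} = ENNReal.ofReal (q ^ (-x) / (1 + q ^ (-x))))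
    (n : ℤ) (S : Set (ℤ → Bool)) (Y Z : ℕ × ℕ → ℤ) (d : ℤ)
    (hY : ∀ p, Y p ≤ n) (hZ : ∀ p, n < Z p)
    (hd : ∀ p : ℕ × ℕ, Z p - Y p = d + p.1 + p.2)
    (hcov : blockingSet n ∩ S
      ⊆ ⋃ p : ℕ × ℕ, (blockingSet n ∩ (evt (Y p) true ∩ evt (Z p) false))) :
    ProbabilityTheory.cond ν (blockingSet n) S
      ≤ ENNReal.ofReal (q ^ d * (1 - q)⁻¹ * (1 - q)⁻¹) := by
  set A := blockingSet n with hA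
  set K : ENNReal := ENNReal.ofReal (q ^ d * (1 - q)⁻¹ * (1 - q)⁻¹) with hK
  have hsum : ν (A ∩ S) ≤ K * ν A := by
    calc ν (A ∩ S) ≤ ν (⋃ p : ℕ × ℕ, (A ∩ (evt (Y p) true ∩ evt (Z p) false))) :=
          measure_mono hcov
      _ ≤ ∑' p : ℕ × ℕ, ν (A ∩ (evt (Y p) true ∩ evt (Z p) false)) := measure_iUnion_le _
      _ ≤ ∑' p : ℕ × ℕ, ENNReal.ofReal (q ^ (Z p - Y p)) * ν A := by
          exact ENNReal.tsum_le_tsum fun p => core_bound hq0 hind hmarg (hY p) (hZ p)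
      _ = ∑' p : ℕ × ℕ, ENNReal.ofReal (q ^ d) * (ENNReal.ofReal q) ^ p.1
            * (ENNReal.ofReal q) ^ p.2 * ν A := by
          refine tsum_congr fun p => ?_
          rw [hd p]
          rw [zpow_add₀ hq0.ne', zpow_add₀ hq0.ne', zpow_natCast, zpow_natCast,
            ENNReal.ofReal_mul (by positivity), ENNReal.ofReal_mul (by positivity),
            ENNReal.ofReal_pow hq0.le, ENNReal.ofReal_pow hq0.le]
      _ = (ENNReal.ofReal (q ^ d) * (1 - ENNReal.ofReal q)⁻¹ * (1 - ENNReal.ofReal q)⁻¹)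
            * ν A := by
          rw [ENNReal.tsum_prod']
          simp_rw [ENNReal.tsum_mul_right, ENNReal.tsum_mul_left, ENNReal.tsum_geometric]
          rw [ENNReal.tsum_mul_right, ENNReal.tsum_mul_left, ENNReal.tsum_geometric]
      _ = K * ν A := by
          rw [hK]
          congr 1
          have h1q : (0:ℝ) < 1 - q := by linarith
          rw [show (1 : ENNReal) - ENNReal.ofReal q = ENNReal.ofReal (1 - q) by
              rw [ENNReal.ofReal_sub _ hq0.le, ENNReal.ofReal_one],
            ← ENNReal.ofReal_inv_of_pos h1q,
            ← ENNReal.ofReal_mul (by positivity), ← ENNReal.ofReal_mul (by positivity)]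
  rw [ProbabilityTheory.cond_apply (measurable_blockingSet n)]
  calc (ν A)⁻¹ * ν (A ∩ S) ≤ (ν A)⁻¹ * (K * ν A) := mul_le_mul_right hsum _
    _ = K * ((ν A)⁻¹ * ν A) := by ring
    _ ≤ K * 1 := mul_le_mul_right (ENNReal.inv_mul_le_one (ν A)) _
    _ = K := mul_one K

/-! ### Final elementary inequality -/

lemma final_real_ineq (hq0 : 0 < q) (hq1 : q < 1) (x : ℝ) (hx : 4 / (1 - q) < x)
    (d : ℤ) (hd : x / (1 - q) ≤ (d : ℝ)) :
    q ^ d * (1 - q)⁻¹ * (1 - q)⁻¹ ≤ 1 * Real.exp (-(1/2) * x) := by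
  set u : ℝ := 1 - q with hu
  have hu0 : 0 < u := by simp [hu]; linarith
  have hu1 : u ≤ 1 := by simp [hu]; linarith
  have hx0 : 0 < x := lt_trans (by positivity) hx
  have hqd : q ^ d ≤ Real.exp (-x) := by
    have h1 : q ^ d = Real.exp ((d : ℝ) * Real.log q) := by
      rw [← Real.log_zpow, Real.exp_log (zpow_pos hq0 d)]
    rw [h1, Real.exp_le_exp]
    have hlogneg : Real.log q < 0 := Real.log_neg hq0 hq1
    have hlog1 : Real.log q ≤ q - 1 := Real.log_le_sub_one_of_pos hq0
    have step1 : (d:ℝ) * Real.log q ≤ (x / u) * Real.log q :=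
      mul_le_mul_of_nonpos_right hd hlogneg.le
    have step2 : (x / u) * Real.log q ≤ (x / u) * (q - 1) :=
      mul_le_mul_of_nonneg_left hlog1 (by positivity)
    have step3 : (x / u) * (q - 1) = -x := by
      rw [show q - 1 = -u by rw [hu]; ring, mul_neg, div_mul_cancel₀ x hu0.ne']
    linarith
  have hexpu : Real.exp (-(2 / u)) ≤ u ^ 2 := by
    have h1 : 1 / u ≤ Real.exp (1 / u) := by
      have := Real.add_one_le_exp (1 / u)
      linarith
    have h2 : (1 / u) ^ 2 ≤ Real.exp (1 / u) ^ 2 := by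
      have h1u : (0:ℝ) ≤ 1 / u := by positivity
      exact pow_le_pow_left₀ h1u h1 2
    have h3 : Real.exp (1 / u) ^ 2 = Real.exp (2 / u) := by
      rw [← Real.exp_nat_mul]
      norm_num
      ring_nf
    rw [h3] at h2
    rw [Real.exp_neg]
    rw [inv_le_comm₀ (Real.exp_pos _) (by positivity)]
    calc (u ^ 2)⁻¹ = (1 / u) ^ 2 := by field_simp
      _ ≤ Real.exp (2 / u) := h2
  have hhalf : Real.exp (-(1/2) * x) * Real.exp (-(1/2) * x) = Real.exp (-x) := by
    rw [← Real.exp_add]; ring_nf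
  have hxhalf : Real.exp (-(1/2) * x) ≤ Real.exp (-(2 / u)) := by
    rw [Real.exp_le_exp]
    have e : 4 / u = 2 * (2 / u) := by ring
    linarith
  have hfin : Real.exp (-x) * (u⁻¹ * u⁻¹) ≤ Real.exp (-(1/2) * x) := by
    rw [← hhalf]
    have e1 : Real.exp (-(1/2) * x) * u⁻¹ * u⁻¹ ≤ 1 := by
      calc Real.exp (-(1/2) * x) * u⁻¹ * u⁻¹ ≤ u ^ 2 * u⁻¹ * u⁻¹ := by
            have := hxhalf.trans hexpu
            gcongr
      _ = 1 := by field_simp [hu0.ne']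
    calc Real.exp (-(1/2) * x) * Real.exp (-(1/2) * x) * (u⁻¹ * u⁻¹)
        = Real.exp (-(1/2) * x) * (Real.exp (-(1/2) * x) * u⁻¹ * u⁻¹) := by ring
      _ ≤ Real.exp (-(1/2) * x) * 1 := by
          exact mul_le_mul_of_nonneg_left e1 (Real.exp_pos _).le
      _ = Real.exp (-(1/2) * x) := mul_one _
  calc q ^ d * (1 - q)⁻¹ * (1 - q)⁻¹ = q ^ d * (u⁻¹ * u⁻¹) := by rw [hu]; ring
    _ ≤ Real.exp (-x) * (u⁻¹ * u⁻¹) := by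
        have : (0:ℝ) ≤ u⁻¹ * u⁻¹ := by positivity
        exact mul_le_mul_of_nonneg_right hqd this
    _ ≤ Real.exp (-(1/2) * x) := hfin
    _ = 1 * Real.exp (-(1/2) * x) := (one_mul _).symm

end Stmt15Aux

/-- For every `ε ∈ (0,1)` there are constants `c₀, C₀, C₁ > 0` depending only on `ε` such that
for every `q ∈ (ε,1)`, for the product Bernoulli measure `ν̃` with marginals
`ν̃(η(x)=1) = q^{-x}/(1+q^{-x})`, every `n ∈ ℤ` and every real `x > C₁/(1-q)`, the blocking
measure `ν^{(n)} = ν̃(·|A_n)` satisfies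
`ν^{(n)}(∃ y < n - x/(1-q), η(y)=1) ≤ C₀ e^{-c₀ x}` and
`ν^{(n)}(∃ y' > n + x/(1-q), η(y')=0) ≤ C₀ e^{-c₀ x}`. -/
theorem stmt15 (ε : ℝ) (hε0 : 0 < ε) (hε1 : ε < 1) :
    ∃ c₀ > (0 : ℝ), ∃ C₀ > (0 : ℝ), ∃ C₁ > (0 : ℝ), ∀ q : ℝ, ε < q → q < 1 →
      ∀ ν : Measure (ℤ → Bool), IsProbabilityMeasure ν →
        iIndepFun (fun i (η : ℤ → Bool) => η i) ν →
        (∀ x : ℤ, ν {η | η x = true} = ENNReal.ofReal (q ^ (-x) / (1 + q ^ (-x)))) →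
        ∀ n : ℤ, ∀ x : ℝ, C₁ / (1 - q) < x →
          ProbabilityTheory.cond ν (blockingSet n)
              {η | ∃ y : ℤ, (y : ℝ) < (n : ℝ) - x / (1 - q) ∧ η y = true}
              ≤ ENNReal.ofReal (C₀ * Real.exp (-c₀ * x)) ∧
            ProbabilityTheory.cond ν (blockingSet n)
              {η | ∃ y : ℤ, (n : ℝ) + x / (1 - q) < (y : ℝ) ∧ η y = false}
              ≤ ENNReal.ofReal (C₀ * Real.exp (-c₀ * x)) := by
  classical
  refine ⟨1/2, by norm_num, 1, by norm_num, 4, by norm_num, ?_⟩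
  intro q hεq hq1 ν hprob hind hmarg n x hx
  haveI := hprob
  have hq0 : 0 < q := lt_trans hε0 hεq
  have h1q : (0:ℝ) < 1 - q := by linarith
  have hx0 : 0 < x := lt_trans (by positivity) hx
  have hxq : 0 < x / (1 - q) := by positivity
  have htarget : ∀ d : ℤ, x / (1 - q) ≤ (d : ℝ) →
      ENNReal.ofReal (q ^ d * (1 - q)⁻¹ * (1 - q)⁻¹)
        ≤ ENNReal.ofReal (1 * Real.exp (-(1/2) * x)) := fun d hd =>
    ENNReal.ofReal_le_ofReal (Stmt15Aux.final_real_ineq hq0 hq1 x hx d hd)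
  constructor
  · -- left tail
    set c : ℝ := (n : ℝ) - x / (1 - q) with hcdef
    set m : ℤ := ⌈c⌉ - 1 with hmdef
    have hmc : (m : ℝ) < c := by
      rw [hmdef]
      push_cast
      have := Int.ceil_lt_add_one c
      linarith
    have hmn : m < n := by
      have : (m : ℝ) < (n : ℝ) := by rw [hcdef] at hmc; linarith
      exact_mod_cast this
    set d : ℤ := n + 1 - m with hddef
    have hdx : x / (1 - q) ≤ (d : ℝ) := by
      rw [hddef]
      push_cast
      rw [hcdef] at hmc
      linarith
    have hcov : blockingSet n ∩ {η | ∃ y : ℤ, (y : ℝ) < (n : ℝ) - x / (1 - q) ∧ η y = true}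
        ⊆ ⋃ p : ℕ × ℕ, (blockingSet n ∩
          (Stmt15Aux.evt (m - (p.1 : ℤ)) true ∩ Stmt15Aux.evt (n + 1 + (p.2 : ℤ)) false)) := by
      rintro η ⟨hA, y₀, hy₀lt, hy₀v⟩
      have hy₀m : y₀ ≤ m := by
        have : y₀ < ⌈c⌉ := Int.lt_ceil.mpr (by rw [hcdef]; exact hy₀lt)
        omega
      obtain ⟨h1, h2, h3⟩ := hA
      have hymem : y₀ ∈ {i : ℤ | i ≤ n ∧ η i = true} := ⟨by omega, hy₀v⟩
      have hpos : 0 < {i : ℤ | i ≤ n ∧ η i = true}.ncard :=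
        (Set.ncard_pos h2).mpr ⟨y₀, hymem⟩
      rw [← h3] at hpos
      obtain ⟨z₀, hz₀n, hz₀v⟩ := (Set.ncard_pos h1).mp hpos
      refine Set.mem_iUnion.mpr ⟨((m - y₀).toNat, (z₀ - (n + 1)).toNat), ⟨h1, h2, h3⟩, ?_, ?_⟩
      · show η (m - ((m - y₀).toNat : ℤ)) ∈ ({true} : Set Bool)
        rw [Int.toNat_of_nonneg (by omega), show m - (m - y₀) = y₀ by ring]
        simpa using hy₀v
      · show η (n + 1 + ((z₀ - (n + 1)).toNat : ℤ)) ∈ ({false} : Set Bool)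
        rw [Int.toNat_of_nonneg (by omega), show n + 1 + (z₀ - (n + 1)) = z₀ by ring]
        simpa using hz₀v
    have hbd := Stmt15Aux.side_bound hq0 hq1 hind hmarg n
      {η | ∃ y : ℤ, (y : ℝ) < (n : ℝ) - x / (1 - q) ∧ η y = true}
      (fun p => m - (p.1 : ℤ)) (fun p => n + 1 + (p.2 : ℤ)) d
      (fun p => by show m - (p.1 : ℤ) ≤ n; omega)
      (fun p => by show n < n + 1 + (p.2 : ℤ); omega)
      (fun p => by rw [hddef]; push_cast; ring) hcov
    calc ProbabilityTheory.cond ν (blockingSet n)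
          {η | ∃ y : ℤ, (y : ℝ) < (n : ℝ) - x / (1 - q) ∧ η y = true}
        ≤ ENNReal.ofReal (q ^ d * (1 - q)⁻¹ * (1 - q)⁻¹) := hbd
      _ ≤ ENNReal.ofReal (1 * Real.exp (-(1/2) * x)) := htarget d hdx
      _ = ENNReal.ofReal (1 * Real.exp (-(1/2 : ℝ) * x)) := rfl
  · -- right tail
    set c : ℝ := (n : ℝ) + x / (1 - q) with hcdef
    set m : ℤ := ⌊c⌋ + 1 with hmdef
    have hmc : c < (m : ℝ) := by
      rw [hmdef]
      push_cast
      have := Int.lt_floor_add_one c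
      linarith
    have hnm : n < m := by
      have : (n : ℝ) < (m : ℝ) := by rw [hcdef] at hmc; linarith
      exact_mod_cast this
    set d : ℤ := m - n with hddef
    have hdx : x / (1 - q) ≤ (d : ℝ) := by
      rw [hddef]
      push_cast
      rw [hcdef] at hmc
      linarith
    have hcov : blockingSet n ∩ {η | ∃ y : ℤ, (n : ℝ) + x / (1 - q) < (y : ℝ) ∧ η y = false}
        ⊆ ⋃ p : ℕ × ℕ, (blockingSet n ∩
          (Stmt15Aux.evt (n - (p.1 : ℤ)) true ∩ Stmt15Aux.evt (m + (p.2 : ℤ)) false)) := by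
      rintro η ⟨hA, z₀, hz₀lt, hz₀v⟩
      have hz₀m : m ≤ z₀ := by
        have : ⌊c⌋ < z₀ := Int.floor_lt.mpr (by rw [hcdef]; exact hz₀lt)
        omega
      have hnz₀ : n < z₀ := by
        have : (n : ℝ) < (z₀ : ℝ) := by linarith
        exact_mod_cast this
      obtain ⟨h1, h2, h3⟩ := hA
      have hzmem : z₀ ∈ {i : ℤ | n < i ∧ η i = false} := ⟨hnz₀, hz₀v⟩
      have hpos : 0 < {i : ℤ | n < i ∧ η i = false}.ncard :=
        (Set.ncard_pos h1).mpr ⟨z₀, hzmem⟩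
      rw [h3] at hpos
      obtain ⟨y₀, hy₀n, hy₀v⟩ := (Set.ncard_pos h2).mp hpos
      refine Set.mem_iUnion.mpr ⟨((n - y₀).toNat, (z₀ - m).toNat), ⟨h1, h2, h3⟩, ?_, ?_⟩
      · show η (n - ((n - y₀).toNat : ℤ)) ∈ ({true} : Set Bool)
        rw [Int.toNat_of_nonneg (by omega), show n - (n - y₀) = y₀ by ring]
        simpa using hy₀v
      · show η (m + ((z₀ - m).toNat : ℤ)) ∈ ({false} : Set Bool)
        rw [Int.toNat_of_nonneg (by omega), show m + (z₀ - m) = z₀ by ring]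
        simpa using hz₀v
    have hbd := Stmt15Aux.side_bound hq0 hq1 hind hmarg n
      {η | ∃ y : ℤ, (n : ℝ) + x / (1 - q) < (y : ℝ) ∧ η y = false}
      (fun p => n - (p.1 : ℤ)) (fun p => m + (p.2 : ℤ)) d
      (fun p => by show n - (p.1 : ℤ) ≤ n; omega)
      (fun p => by show n < m + (p.2 : ℤ); omega)
      (fun p => by rw [hddef]; push_cast; ring) hcov
    calc ProbabilityTheory.cond ν (blockingSet n)
          {η | ∃ y : ℤ, (n : ℝ) + x / (1 - q) < (y : ℝ) ∧ η y = false}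
        ≤ ENNReal.ofReal (q ^ d * (1 - q)⁻¹ * (1 - q)⁻¹) := hbd
      _ ≤ ENNReal.ofReal (1 * Real.exp (-(1/2) * x)) := htarget d hdx
      _ = ENNReal.ofReal (1 * Real.exp (-(1/2 : ℝ) * x)) := rfl
end

section
/- For every ε ∈ (0,1) there exists a constant c > 0, depending only on ε, such that for all q ∈ (ε,1) one has ν̃(A₀) ≥ c·(1−q). -/
open MeasureTheory ProbabilityTheory
open Finset

/-- weight of value `v` at site `j+1`. -/
noncomputable def bw (q : ℝ) (j : ℕ) (v : Bool) : ℝ :=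
  if v then 1/(1+q^(j+1)) else q^(j+1)/(1+q^(j+1))

noncomputable def bW (q : ℝ) {n : ℕ} (a : Fin n → Bool) : ℝ := ∏ j : Fin n, bw q (j : ℕ) (a j)

def gfun (n : ℕ) (a b : Fin n → Bool) (i : ℤ) : Bool :=
  if h : 1 ≤ i ∧ i ≤ n then a ⟨(i-1).toNat, by omega⟩
  else if h2 : 1 ≤ -i ∧ -i ≤ n then b ⟨(-i-1).toNat, by omega⟩
  else if i = (n:ℤ)+1 then true else false

lemma gfun_pos {n : ℕ} (a b : Fin n → Bool) (j : Fin n) : gfun n a b ((j:ℤ)+1) = a j := by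
  have h : 1 ≤ (j:ℤ)+1 ∧ (j:ℤ)+1 ≤ n := by have := j.2; omega
  rw [gfun, dif_pos h]
  congr 1
  apply Fin.ext
  show ((j:ℤ)+1-1).toNat = j
  omega

lemma gfun_neg {n : ℕ} (a b : Fin n → Bool) (j : Fin n) : gfun n a b (-(j:ℤ)-1) = b j := by
  have hj := j.2
  have h1 : ¬ (1 ≤ -(j:ℤ)-1 ∧ -(j:ℤ)-1 ≤ n) := by omega
  have h2 : 1 ≤ -(-(j:ℤ)-1) ∧ -(-(j:ℤ)-1) ≤ n := by omega
  rw [gfun, dif_neg h1, dif_pos h2]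
  congr 1
  apply Fin.ext
  show (-(-(j:ℤ)-1)-1).toNat = j
  omega

lemma gfun_zero {n : ℕ} (a b : Fin n → Bool) : gfun n a b 0 = false := by
  rw [gfun, dif_neg (by omega), dif_neg (by omega), if_neg (by omega)]

lemma gfun_top {n : ℕ} (a b : Fin n → Bool) : gfun n a b ((n:ℤ)+1) = true := by
  rw [gfun, dif_neg (by omega), dif_neg (by omega), if_pos rfl]

section marg
variable {q : ℝ} (hq0 : 0 < q) (hq1 : q < 1)
  {ν : Measure (ℤ → Bool)} [IsProbabilityMeasure ν]
  (hmarg : ∀ x : ℤ, ν {η | η x = true} = ENNReal.ofReal (q ^ (-x) / (1 + q ^ (-x))))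

lemma meas_event (x : ℤ) (v : Bool) : MeasurableSet {η : ℤ → Bool | η x = v} := by
  have : {η : ℤ → Bool | η x = v} = (fun η : ℤ → Bool => η x) ⁻¹' {v} := rfl
  rw [this]
  exact (measurable_pi_apply x) (measurableSet_singleton v)

include hq0 hmarg in
lemma marg_true (x : ℤ) : ν {η | η x = true} = ENNReal.ofReal (1 / (1 + q ^ x)) := by
  rw [hmarg x]
  congr 1
  have h1 : (0:ℝ) < q ^ x := zpow_pos hq0 x
  have h2 : (0:ℝ) < q ^ (-x) := zpow_pos hq0 (-x)
  rw [zpow_neg]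
  field_simp
  ring

include hq0 hmarg in
lemma marg_false (x : ℤ) : ν {η | η x = false} = ENNReal.ofReal (q ^ x / (1 + q ^ x)) := by
  have hc : {η : ℤ → Bool | η x = false} = {η : ℤ → Bool | η x = true}ᶜ := by
    ext η; simp
  have h1 : (0:ℝ) < q ^ x := zpow_pos hq0 x
  rw [hc, measure_compl (meas_event x true) (measure_ne_top ν _), marg_true hq0 hmarg,
    measure_univ, ← ENNReal.ofReal_one, ← ENNReal.ofReal_sub _ (by positivity)]
  congr 1
  field_simp
  ring

include hq0 hmarg in
lemma marg_val (x : ℤ) (v : Bool) :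
    ν {η | η x = v} = ENNReal.ofReal (if v then 1/(1+q^x) else q^x/(1+q^x)) := by
  cases v
  · simpa using marg_false hq0 hmarg x
  · simpa using marg_true hq0 hmarg x

end marg
def Cyl (n : ℕ) (a b : Fin n → Bool) : Set (ℤ → Bool) :=
  {η | ∀ i ∈ Finset.Icc (-(n:ℤ)) ((n:ℤ)+1), η i = gfun n a b i}

lemma Cyl_eq (n : ℕ) (a b : Fin n → Bool) :
    Cyl n a b = ⋂ i ∈ Finset.Icc (-(n:ℤ)) ((n:ℤ)+1),
      (fun η : ℤ → Bool => η i) ⁻¹' {gfun n a b i} := by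
  ext η
  simp [Cyl, Set.mem_iInter]

lemma Cyl_measurable (n : ℕ) (a b : Fin n → Bool) : MeasurableSet (Cyl n a b) := by
  rw [Cyl_eq]
  exact MeasurableSet.biInter (Finset.Icc _ _).countable_toSet
    (fun i _ => meas_event i (gfun n a b i))

lemma measCyl {ν : Measure (ℤ → Bool)}
    (hInd : iIndepFun (fun i η => η i) ν)
    (n : ℕ) (a b : Fin n → Bool) :
    ν (Cyl n a b) = ∏ i ∈ Finset.Icc (-(n:ℤ)) ((n:ℤ)+1), ν {η | η i = gfun n a b i} := by
  rw [Cyl_eq]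
  rw [iIndepFun_iff_measure_inter_preimage_eq_mul] at hInd
  exact hInd (Finset.Icc _ _) (fun i _ => measurableSet_singleton _)
lemma icc_split (n : ℕ) :
    Finset.Icc (-(n:ℤ)) ((n:ℤ)+1) =
      (insert (0:ℤ) ((Finset.range n).image (fun j : ℕ => -(j:ℤ)-1))) ∪
      (insert ((n:ℤ)+1) ((Finset.range n).image (fun j : ℕ => (j:ℤ)+1))) := by
  ext i
  simp only [Finset.mem_Icc, Finset.mem_union, Finset.mem_insert, Finset.mem_image,
    Finset.mem_range]
  constructor
  · rintro ⟨h1, h2⟩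
    by_cases hi0 : i = 0
    · tauto
    by_cases hitop : i = (n:ℤ)+1
    · tauto
    rcases lt_or_gt_of_ne hi0 with hneg | hpos
    · exact Or.inl (Or.inr ⟨(-i-1).toNat, by omega, by omega⟩)
    · exact Or.inr (Or.inr ⟨(i-1).toNat, by omega, by omega⟩)
  · rintro ((rfl | ⟨j, hj, rfl⟩) | (rfl | ⟨j, hj, rfl⟩)) <;> omega

lemma prod_Rf {M : Type*} [CommMonoid M] (n : ℕ) (Rf : ℤ → M) :
    ∏ i ∈ Finset.Icc (-(n:ℤ)) ((n:ℤ)+1), Rf i =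
      (Rf 0 * ∏ j : Fin n, Rf (-(j:ℤ)-1)) * (Rf ((n:ℤ)+1) * ∏ j : Fin n, Rf ((j:ℤ)+1)) := by
  rw [icc_split, Finset.prod_union, Finset.prod_insert, Finset.prod_insert,
    Finset.prod_image, Finset.prod_image,
    ← Fin.prod_univ_eq_prod_range (fun j : ℕ => Rf (-(j:ℤ)-1)) n,
    ← Fin.prod_univ_eq_prod_range (fun j : ℕ => Rf ((j:ℤ)+1)) n]
  · intro x _ y _ h; simp only at h; omega
  · intro x _ y _ h; simp only at h; omega
  · simp only [Finset.mem_image, Finset.mem_range]; rintro ⟨j, hj, h⟩; omega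
  · simp only [Finset.mem_image, Finset.mem_range]; rintro ⟨j, hj, h⟩; omega
  · rw [Finset.disjoint_left]
    intro i hi hi'
    simp only [Finset.mem_insert, Finset.mem_image, Finset.mem_range] at hi hi'
    rcases hi with rfl | ⟨j, hj, rfl⟩ <;> rcases hi' with h | ⟨j', hj', h⟩ <;> omega

section cylreal
variable {q : ℝ} (hq0 : 0 < q) (hq1 : q < 1)
  {ν : Measure (ℤ → Bool)} [IsProbabilityMeasure ν]
  (hmarg : ∀ x : ℤ, ν {η | η x = true} = ENNReal.ofReal (q ^ (-x) / (1 + q ^ (-x))))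

include hq0 in
lemma inv_form1 (m : ℕ) : 1/(1+q^(-(m:ℤ))) = q^m/(1+q^m) := by
  have hp : (0:ℝ) < q^m := pow_pos hq0 m
  rw [zpow_neg, zpow_natCast]
  rw [div_eq_div_iff (by positivity) (by positivity)]
  field_simp
  ring

include hq0 in
lemma inv_form2 (m : ℕ) : q^(-(m:ℤ))/(1+q^(-(m:ℤ))) = 1/(1+q^m) := by
  have hp : (0:ℝ) < q^m := pow_pos hq0 m
  rw [zpow_neg, zpow_natCast]
  rw [div_eq_div_iff (by positivity) (by positivity)]
  field_simp
  ring

include hq0 hmarg in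
lemma measCyl_real
    (hInd : iIndepFun (fun i η => η i) ν)
    (n : ℕ) (a b : Fin n → Bool) :
    ν (Cyl n a b) = ENNReal.ofReal
      ((1/2) * (1/(1+q^(n+1))) * (bW q a * bW q (fun j => !(b j)))) := by
  classical
  have hRf0 : ∀ i : ℤ, 0 ≤ (if gfun n a b i then 1/(1+q^i) else q^i/(1+q^i)) := by
    intro i
    have h1 : (0:ℝ) < q ^ i := zpow_pos hq0 i
    split <;> positivity
  have hfac : ∀ i ∈ Finset.Icc (-(n:ℤ)) ((n:ℤ)+1),
      ν {η | η i = gfun n a b i}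
        = ENNReal.ofReal (if gfun n a b i then 1/(1+q^i) else q^i/(1+q^i)) := by
    intro i _
    rw [marg_val hq0 hmarg]
  rw [measCyl hInd, Finset.prod_congr rfl hfac,
    ← ENNReal.ofReal_prod_of_nonneg (fun i _ => hRf0 i)]
  congr 1
  rw [prod_Rf n (fun i => if gfun n a b i then 1/(1+q^i) else q^i/(1+q^i))]
  have h0 : (if gfun n a b 0 then 1/(1+q^(0:ℤ)) else q^(0:ℤ)/(1+q^(0:ℤ))) = 1/2 := by
    rw [gfun_zero]
    norm_num
  have htop : (if gfun n a b ((n:ℤ)+1) then 1/(1+q^((n:ℤ)+1)) else q^((n:ℤ)+1)/(1+q^((n:ℤ)+1)))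
      = 1/(1+q^(n+1)) := by
    rw [gfun_top, if_pos rfl,
      show ((n:ℤ)+1) = ((n+1:ℕ):ℤ) by push_cast; ring, zpow_natCast]
  have hpos : ∀ j : Fin n,
      (if gfun n a b ((j:ℤ)+1) then 1/(1+q^((j:ℤ)+1)) else q^((j:ℤ)+1)/(1+q^((j:ℤ)+1)))
        = bw q (j:ℕ) (a j) := by
    intro j
    rw [gfun_pos, bw,
      show ((j:ℤ)+1) = (((j:ℕ)+1:ℕ):ℤ) by push_cast; ring, zpow_natCast]
  have hneg : ∀ j : Fin n,
      (if gfun n a b (-(j:ℤ)-1) then 1/(1+q^(-(j:ℤ)-1)) else q^(-(j:ℤ)-1)/(1+q^(-(j:ℤ)-1)))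
        = bw q (j:ℕ) (!(b j)) := by
    intro j
    have e1 := inv_form1 hq0 (q := q) ((j:ℕ)+1)
    have e2 := inv_form2 hq0 (q := q) ((j:ℕ)+1)
    rw [gfun_neg, bw,
      show (-(j:ℤ)-1) = -(((j:ℕ)+1:ℕ):ℤ) by push_cast; ring]
    cases b j
    · simpa using e2
    · simpa using e1
  rw [h0, htop, Finset.prod_congr rfl (fun j _ => hpos j),
    Finset.prod_congr rfl (fun j _ => hneg j)]
  show (1/2 * bW q (fun j => !(b j))) * ((1/(1+q^(n+1))) * bW q a) = _
  rw [bW, bW]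
  ring

end cylreal

def cntF {n : ℕ} (a : Fin n → Bool) : ℕ := (Finset.univ.filter fun j => a j = false).card
def cntT {n : ℕ} (b : Fin n → Bool) : ℕ := (Finset.univ.filter fun j => b j = true).card

noncomputable def Pk (q : ℝ) (n : ℕ) (k : ℕ) : ℝ :=
  ∑ a ∈ Finset.univ.filter (fun a : Fin n → Bool => cntF a = k), bW q a

section sums
variable {q : ℝ} (hq0 : 0 < q) (hq1 : q < 1)

include hq0 in
lemma bw_nonneg (j : ℕ) (v : Bool) : 0 ≤ bw q j v := by
  have : (0:ℝ) < q^(j+1) := pow_pos hq0 _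
  rw [bw]
  split <;> positivity

include hq0 in
lemma bw_sum (j : ℕ) : bw q j true + bw q j false = 1 := by
  have : (0:ℝ) < q^(j+1) := pow_pos hq0 _
  rw [bw, bw, if_pos rfl, if_neg (by simp)]
  field_simp

include hq0 in
lemma bW_nonneg {n : ℕ} (a : Fin n → Bool) : 0 ≤ bW q a :=
  Finset.prod_nonneg fun j _ => bw_nonneg hq0 _ _

include hq0 in
lemma sum_bW (n : ℕ) : ∑ a : Fin n → Bool, bW q a = 1 := by
  classical
  have h := Finset.prod_univ_sum (fun _ : Fin n => (Finset.univ : Finset Bool))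
    (fun j v => bw q (j : ℕ) v)
  rw [Fintype.piFinset_univ] at h
  have h2 : ∀ j : Fin n, ∑ v ∈ (Finset.univ : Finset Bool), bw q (j:ℕ) v = 1 := by
    intro j
    rw [Fintype.sum_bool]
    exact bw_sum hq0 _
  calc ∑ a : Fin n → Bool, bW q a = ∏ j : Fin n, ∑ v ∈ (Finset.univ : Finset Bool), bw q (j:ℕ) v := by
        rw [h]; rfl
    _ = 1 := by rw [Finset.prod_congr rfl (fun j _ => h2 j)]; simp

lemma cntF_le {n : ℕ} (a : Fin n → Bool) : cntF a ≤ n := by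
  have := Finset.card_filter_le (Finset.univ : Finset (Fin n)) (fun j => a j = false)
  simpa [cntF] using this

include hq0 in
lemma sum_Pk (n : ℕ) : ∑ k ∈ Finset.range (n+1), Pk q n k = 1 := by
  classical
  unfold Pk
  rw [Finset.sum_fiberwise_of_maps_to (fun a _ => Finset.mem_range.2 (Nat.lt_succ_of_le (cntF_le a)))]
  exact sum_bW hq0 n

include hq0 in
lemma sum_bW_cond {n : ℕ} (j : Fin n) :
    ∑ a : Fin n → Bool, (if a j = false then bW q a else 0) = bw q (j:ℕ) false := by
  classical
  have h := Finset.prod_univ_sum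
    (fun j' : Fin n => if j' = j then ({false} : Finset Bool) else Finset.univ)
    (fun j' v => bw q (j' : ℕ) v)
  have hLHS : ∏ j' : Fin n, ∑ v ∈ (if j' = j then ({false} : Finset Bool) else Finset.univ),
      bw q (j' : ℕ) v = bw q (j:ℕ) false := by
    rw [Finset.prod_eq_single j]
    · rw [if_pos rfl, Finset.sum_singleton]
    · intro j' _ hne
      rw [if_neg hne, Fintype.sum_bool, bw_sum hq0]
    · intro h; exact absurd (Finset.mem_univ j) h
  have hpi : Fintype.piFinset
      (fun j' : Fin n => if j' = j then ({false} : Finset Bool) else Finset.univ)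
      = Finset.univ.filter (fun a : Fin n → Bool => a j = false) := by
    ext a
    simp only [Fintype.mem_piFinset, Finset.mem_filter, Finset.mem_univ, true_and]
    constructor
    · intro h2; have := h2 j; simpa using this
    · intro h2 j'
      by_cases hj : j' = j
      · subst hj; simpa using h2
      · simp [hj]
  rw [hLHS, hpi] at h
  calc ∑ a : Fin n → Bool, (if a j = false then bW q a else 0)
      = ∑ a ∈ Finset.univ.filter (fun a : Fin n → Bool => a j = false), bW q a :=
        (Finset.sum_filter _ _).symm
    _ = bw q (j:ℕ) false := h.symm

include hq0 hq1 in
lemma mean_bound (n : ℕ) : ∑ k ∈ Finset.range (n+1), (k:ℝ) * Pk q n k ≤ 1/(1-q) := by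
  classical
  have step1 : ∑ k ∈ Finset.range (n+1), (k:ℝ) * Pk q n k
      = ∑ a : Fin n → Bool, (cntF a : ℝ) * bW q a := by
    unfold Pk
    rw [← Finset.sum_fiberwise_of_maps_to
      (fun a _ => Finset.mem_range.2 (Nat.lt_succ_of_le (cntF_le a)))
      (fun a => (cntF a : ℝ) * bW q a)]
    apply Finset.sum_congr rfl
    intro k _
    rw [Finset.mul_sum]
    apply Finset.sum_congr rfl
    intro a ha
    rw [Finset.mem_filter] at ha
    rw [ha.2]
  have step2 : ∀ a : Fin n → Bool, (cntF a : ℝ) * bW q a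
      = ∑ j : Fin n, (if a j = false then bW q a else 0) := by
    intro a
    rw [← Finset.sum_filter, Finset.sum_const, nsmul_eq_mul, cntF]
  have step3 : ∑ a : Fin n → Bool, (cntF a : ℝ) * bW q a
      = ∑ j : Fin n, bw q (j:ℕ) false := by
    rw [Finset.sum_congr rfl (fun a _ => step2 a), Finset.sum_comm]
    exact Finset.sum_congr rfl (fun j _ => sum_bW_cond hq0 j)
  rw [step1, step3]
  have hbound : ∀ j : Fin n, bw q (j:ℕ) false ≤ q^((j:ℕ)+1) := by
    intro j
    have h1 : (0:ℝ) < q^((j:ℕ)+1) := pow_pos hq0 _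
    rw [bw, if_neg (by simp)]
    apply div_le_self h1.le
    nlinarith
  calc ∑ j : Fin n, bw q (j:ℕ) false ≤ ∑ j : Fin n, q^((j:ℕ)+1) :=
        Finset.sum_le_sum (fun j _ => hbound j)
    _ = ∑ j ∈ Finset.range n, q^(j+1) := Fin.sum_univ_eq_sum_range (fun j => q^(j+1)) n
    _ ≤ ∑' j : ℕ, q^(j+1) := by
        apply Summable.sum_le_tsum _ (fun j _ => pow_nonneg hq0.le _)
        exact ((summable_geometric_of_lt_one hq0.le hq1).mul_left q).congr
          (fun j => (pow_succ' q j).symm)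
    _ = q * (1-q)⁻¹ := by
        rw [tsum_congr (fun j => pow_succ' q j), tsum_mul_left,
          tsum_geometric_of_lt_one hq0.le hq1]
    _ ≤ 1/(1-q) := by
        rw [one_div]
        have h1q : (0:ℝ) < 1-q := by linarith
        have : (0:ℝ) < (1-q)⁻¹ := inv_pos.2 h1q
        nlinarith

lemma cntT_not {n : ℕ} (b : Fin n → Bool) : cntF (fun j => !(b j)) = cntT b := by
  unfold cntF cntT
  congr 1
  apply Finset.filter_congr
  intro j _
  simp

lemma cntF_not {n : ℕ} (b : Fin n → Bool) : cntT (fun j => !(b j)) = cntF b := by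
  unfold cntF cntT
  congr 1
  apply Finset.filter_congr
  intro j _
  simp

lemma quad_eq (q : ℝ) (n : ℕ) :
    ∑ p ∈ Finset.univ.filter
        (fun p : (Fin n → Bool) × (Fin n → Bool) => cntF p.1 = cntT p.2),
      bW q p.1 * bW q (fun j => !(p.2 j))
    = ∑ k ∈ Finset.range (n+1), (Pk q n k)^2 := by
  classical
  -- step A : change variables p.2 ↦ !p.2
  have stepA : ∑ p ∈ Finset.univ.filter
        (fun p : (Fin n → Bool) × (Fin n → Bool) => cntF p.1 = cntT p.2),
      bW q p.1 * bW q (fun j => !(p.2 j))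
      = ∑ p ∈ Finset.univ.filter
        (fun p : (Fin n → Bool) × (Fin n → Bool) => cntF p.1 = cntF p.2),
      bW q p.1 * bW q p.2 := by
    apply Finset.sum_nbij' (fun p => (p.1, fun j => !(p.2 j)))
      (fun p => (p.1, fun j => !(p.2 j)))
    · intro p hp
      rw [Finset.mem_filter] at hp ⊢
      refine ⟨Finset.mem_univ _, ?_⟩
      dsimp only
      rw [cntT_not]
      exact hp.2
    · intro p hp
      rw [Finset.mem_filter] at hp ⊢
      refine ⟨Finset.mem_univ _, ?_⟩
      dsimp only
      rw [cntF_not]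
      exact hp.2
    · intro p _; simp
    · intro p _; simp
    · intro p _; rfl
  rw [stepA]
  -- step B : fiber decomposition
  have stepB : (Finset.range (n+1)).biUnion (fun k =>
        (Finset.univ.filter (fun a : Fin n → Bool => cntF a = k)) ×ˢ
        (Finset.univ.filter (fun a : Fin n → Bool => cntF a = k)))
      = Finset.univ.filter
        (fun p : (Fin n → Bool) × (Fin n → Bool) => cntF p.1 = cntF p.2) := by
    ext p
    simp only [Finset.mem_biUnion, Finset.mem_range, Finset.mem_product, Finset.mem_filter,
      Finset.mem_univ, true_and]
    constructor
    · rintro ⟨k, _, h1, h2⟩; omega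
    · intro h
      exact ⟨cntF p.1, Nat.lt_succ_of_le (cntF_le p.1), rfl, h.symm⟩
  rw [← stepB, Finset.sum_biUnion]
  · apply Finset.sum_congr rfl
    intro k _
    rw [Pk, sq, Finset.sum_mul_sum]
    rw [Finset.sum_product]
  · intro k hk k' hk' hkk'
    simp only [Function.onFun]
    rw [Finset.disjoint_left]
    intro p hp hp'
    simp only [Finset.mem_product, Finset.mem_filter] at hp hp'
    exact hkk' (hp.1.2 ▸ hp'.1.2 ▸ rfl)

lemma anticoncentration {q : ℝ} (hq0 : 0 < q) (hq1 : q < 1) (n : ℕ) :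
    (1-q)/12 ≤ ∑ k ∈ Finset.range (n+1), (Pk q n k)^2 := by
  classical
  have h1q : (0:ℝ) < 1 - q := by linarith
  set α : ℕ → ℝ := fun k => max 0 (1 - k*(1-q)/2) with hα
  have hPk0 : ∀ k, 0 ≤ Pk q n k := fun k =>
    Finset.sum_nonneg (fun a _ => bW_nonneg hq0 a)
  -- lower bound on the inner product
  have hinner : (1:ℝ)/2 ≤ ∑ k ∈ Finset.range (n+1), Pk q n k * α k := by
    have hge : ∀ k ∈ Finset.range (n+1),
        Pk q n k * (1 - k*(1-q)/2) ≤ Pk q n k * α k := by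
      intro k _
      exact mul_le_mul_of_nonneg_left (le_max_right _ _) (hPk0 k)
    have hsum : ∑ k ∈ Finset.range (n+1), Pk q n k * (1 - k*(1-q)/2)
        = (∑ k ∈ Finset.range (n+1), Pk q n k)
          - (1-q)/2 * ∑ k ∈ Finset.range (n+1), (k:ℝ) * Pk q n k := by
      rw [Finset.mul_sum, ← Finset.sum_sub_distrib]
      apply Finset.sum_congr rfl
      intro k _
      ring
    have hEX := mean_bound hq0 hq1 n
    have hEX0 : 0 ≤ ∑ k ∈ Finset.range (n+1), (k:ℝ) * Pk q n k :=
      Finset.sum_nonneg (fun k _ => mul_nonneg (Nat.cast_nonneg k) (hPk0 k))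
    have h2 : (1-q)/2 * ∑ k ∈ Finset.range (n+1), (k:ℝ) * Pk q n k ≤ 1/2 := by
      calc (1-q)/2 * ∑ k ∈ Finset.range (n+1), (k:ℝ) * Pk q n k
          ≤ (1-q)/2 * (1/(1-q)) := by
            apply mul_le_mul_of_nonneg_left hEX (by linarith)
        _ = 1/2 := by
            field_simp
    calc (1:ℝ)/2 = 1 - 1/2 := by norm_num
      _ ≤ (∑ k ∈ Finset.range (n+1), Pk q n k)
          - (1-q)/2 * ∑ k ∈ Finset.range (n+1), (k:ℝ) * Pk q n k := by
          rw [sum_Pk hq0 n]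
          linarith
      _ = ∑ k ∈ Finset.range (n+1), Pk q n k * (1 - k*(1-q)/2) := hsum.symm
      _ ≤ ∑ k ∈ Finset.range (n+1), Pk q n k * α k := Finset.sum_le_sum hge
  -- upper bound on ∑ α²
  have hαsq : ∑ k ∈ Finset.range (n+1), (α k)^2 ≤ 3/(1-q) := by
    have hpt : ∀ k ∈ Finset.range (n+1),
        (α k)^2 ≤ (if (k:ℝ) < 2/(1-q) then (1:ℝ) else 0) := by
      intro k _
      by_cases h : (k:ℝ) < 2/(1-q)
      · rw [if_pos h]
        have hle : α k ≤ 1 := by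
          rw [hα]
          apply max_le (by norm_num)
          have : 0 ≤ (k:ℝ)*(1-q)/2 := by positivity
          linarith
        have h0 : 0 ≤ α k := le_max_left _ _
        calc (α k)^2 ≤ 1^2 := pow_le_pow_left₀ h0 hle 2
          _ = 1 := one_pow 2
      · rw [if_neg h]
        push_neg at h
        have : (2:ℝ) ≤ (k:ℝ)*(1-q) := by
          rw [div_le_iff₀ h1q] at h
          linarith
        have hz : α k = 0 := by
          rw [hα]
          apply max_eq_left
          linarith
        rw [hz]
        norm_num
    calc ∑ k ∈ Finset.range (n+1), (α k)^2
        ≤ ∑ k ∈ Finset.range (n+1), (if (k:ℝ) < 2/(1-q) then (1:ℝ) else 0) :=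
          Finset.sum_le_sum hpt
      _ = (((Finset.range (n+1)).filter (fun k : ℕ => (k:ℝ) < 2/(1-q))).card : ℝ) := by
          rw [Finset.sum_boole]
      _ ≤ (⌈(2:ℝ)/(1-q)⌉₊ : ℝ) := by
          have hsub : (Finset.range (n+1)).filter (fun k : ℕ => (k:ℝ) < 2/(1-q))
              ⊆ Finset.range ⌈(2:ℝ)/(1-q)⌉₊ := by
            intro k hk
            rw [Finset.mem_filter] at hk
            rw [Finset.mem_range]
            exact Nat.lt_ceil.2 hk.2
          have := Finset.card_le_card hsub
          rw [Finset.card_range] at this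
          exact_mod_cast this
      _ ≤ 3/(1-q) := by
          have hc : (0:ℝ) ≤ 2/(1-q) := by positivity
          have h1 := Nat.ceil_lt_add_one hc
          have h2 : 3/(1-q) - (2/(1-q)+1) = q/(1-q) := by
            field_simp
            ring
          have h3 : (0:ℝ) ≤ q/(1-q) := div_nonneg hq0.le h1q.le
          linarith
  -- Cauchy-Schwarz
  have hCS := Finset.sum_mul_sq_le_sq_mul_sq (Finset.range (n+1)) (fun k => Pk q n k) α
  have hT0 : (0:ℝ) ≤ ∑ k ∈ Finset.range (n+1), (Pk q n k)^2 :=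
    Finset.sum_nonneg (fun k _ => sq_nonneg _)
  have h14 : (1:ℝ)/4 ≤ (∑ k ∈ Finset.range (n+1), (Pk q n k)^2)
      * ∑ k ∈ Finset.range (n+1), (α k)^2 := by
    nlinarith [hCS, hinner]
  have h15 : (∑ k ∈ Finset.range (n+1), (Pk q n k)^2)
      * (∑ k ∈ Finset.range (n+1), (α k)^2)
      ≤ (∑ k ∈ Finset.range (n+1), (Pk q n k)^2) * (3/(1-q)) :=
    mul_le_mul_of_nonneg_left hαsq hT0
  have h16 : (1:ℝ)/4 ≤ (∑ k ∈ Finset.range (n+1), (Pk q n k)^2) * (3/(1-q)) :=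
    le_trans h14 h15
  rw [← mul_div_assoc, le_div_iff₀ h1q] at h16
  linarith

end sums

/-! ### The union event and its measure -/

noncomputable def Sset (n : ℕ) : Finset ((Fin n → Bool) × (Fin n → Bool)) := by
  classical
  exact Finset.univ.filter (fun p => cntF p.1 = cntT p.2)

def Fev (n : ℕ) : Set (ℤ → Bool) := ⋃ p ∈ Sset n, Cyl n p.1 p.2

lemma Cyl_disjoint {n : ℕ} {p p' : (Fin n → Bool) × (Fin n → Bool)} (hne : p ≠ p') :
    Disjoint (Cyl n p.1 p.2) (Cyl n p'.1 p'.2) := by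
  rw [Set.disjoint_left]
  intro η h1 h2
  apply hne
  have key : ∀ i ∈ Finset.Icc (-(n:ℤ)) ((n:ℤ)+1),
      gfun n p.1 p.2 i = gfun n p'.1 p'.2 i := by
    intro i hi
    rw [← h1 i hi, h2 i hi]
  have ha : p.1 = p'.1 := by
    funext j
    have hj := j.2
    have hmem : (j:ℤ)+1 ∈ Finset.Icc (-(n:ℤ)) ((n:ℤ)+1) := by
      rw [Finset.mem_Icc]; omega
    have := key _ hmem
    rwa [gfun_pos, gfun_pos] at this
  have hb : p.2 = p'.2 := by
    funext j
    have hj := j.2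
    have hmem : -(j:ℤ)-1 ∈ Finset.Icc (-(n:ℤ)) ((n:ℤ)+1) := by
      rw [Finset.mem_Icc]; omega
    have := key _ hmem
    rwa [gfun_neg, gfun_neg] at this
  exact Prod.ext ha hb

section Fmeas
variable {q : ℝ} (hq0 : 0 < q) (hq1 : q < 1)
  {ν : Measure (ℤ → Bool)} [IsProbabilityMeasure ν]
  (hmarg : ∀ x : ℤ, ν {η | η x = true} = ENNReal.ofReal (q ^ (-x) / (1 + q ^ (-x))))
  (hInd : iIndepFun (fun i η => η i) ν)

include hq0 hq1 hmarg hInd in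
lemma measF_lower (n : ℕ) : ENNReal.ofReal ((1-q)/48) ≤ ν (Fev n) := by
  classical
  have hK : ν (Fev n) = ∑ p ∈ Sset n, ν (Cyl n p.1 p.2) := by
    rw [Fev]
    exact measure_biUnion_finset
      (fun p _ p' _ hne => Cyl_disjoint hne)
      (fun p _ => Cyl_measurable n p.1 p.2)
  have hqn1 : (0:ℝ) < q^(n+1) := pow_pos hq0 _
  have hqn2 : q^(n+1) ≤ 1 := pow_le_one₀ hq0.le hq1.le
  have hWnn : ∀ p : (Fin n → Bool) × (Fin n → Bool),
      0 ≤ (1/2) * (1/(1+q^(n+1))) * (bW q p.1 * bW q (fun j => !(p.2 j))) := by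
    intro p
    have := bW_nonneg hq0 p.1
    have := bW_nonneg hq0 (fun j => !(p.2 j))
    positivity
  have hsum : ν (Fev n) = ENNReal.ofReal ((1/2) * (1/(1+q^(n+1))) *
      ∑ p ∈ Sset n, bW q p.1 * bW q (fun j => !(p.2 j))) := by
    rw [hK, Finset.sum_congr rfl (fun p _ => measCyl_real hq0 hmarg hInd n p.1 p.2),
      ← ENNReal.ofReal_sum_of_nonneg (fun p _ => hWnn p), Finset.mul_sum]
  rw [hsum]
  apply ENNReal.ofReal_le_ofReal
  have hquad : ∑ p ∈ Sset n, bW q p.1 * bW q (fun j => !(p.2 j))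
      = ∑ k ∈ Finset.range (n+1), (Pk q n k)^2 := by
    rw [Sset]
    exact quad_eq q n
  rw [hquad]
  have hanti := anticoncentration hq0 hq1 n
  have hKge : (1:ℝ)/4 ≤ (1/2) * (1/(1+q^(n+1))) := by
    have he : (1:ℝ)/2 * (1/(1+q^(n+1))) = 1/(2*(1+q^(n+1))) := by rw [div_mul_div_comm, one_mul]
    rw [he, div_le_div_iff₀ (by norm_num) (by linarith)]
    linarith
  have h1q : (0:ℝ) < 1 - q := by linarith
  calc (1-q)/48 = (1/4) * ((1-q)/12) := by ring
    _ ≤ ((1/2) * (1/(1+q^(n+1)))) * ∑ k ∈ Finset.range (n+1), (Pk q n k)^2 := by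
        apply mul_le_mul hKge hanti (by linarith) (by linarith)

/-! ### Tail event -/

def Tailev (n : ℕ) : Set (ℤ → Bool) :=
  {η | (∀ i : ℤ, (n:ℤ)+1 < i → η i = true) ∧ (∀ i : ℤ, i < -(n:ℤ) → η i = false)}

include hq0 hq1 hmarg in
lemma measTail (n : ℕ) :
    ν (Tailev n)ᶜ ≤ ENNReal.ofReal (2 * (q^(n+1) * (1-q)⁻¹)) := by
  classical
  have h1q : (0:ℝ) < 1 - q := by linarith
  have hsub : (Tailev n)ᶜ ⊆
      (⋃ k : ℕ, {η : ℤ → Bool | η ((n:ℤ)+2+k) = false}) ∪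
      (⋃ k : ℕ, {η : ℤ → Bool | η (-(n:ℤ)-1-k) = true}) := by
    intro η hη
    simp only [Tailev, Set.mem_compl_iff, Set.mem_setOf_eq, not_and_or, not_forall] at hη
    rcases hη with ⟨i, hi, hne⟩ | ⟨i, hi, hne⟩
    · left
      refine Set.mem_iUnion.2 ⟨(i-(n:ℤ)-2).toNat, ?_⟩
      have hidx : (n:ℤ)+2+((i-(n:ℤ)-2).toNat : ℤ) = i := by omega
      have hval : η i = false := by
        cases h : η i
        · rfl
        · exact absurd h hne
      simp only [Set.mem_setOf_eq, hidx]
      exact hval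
    · right
      refine Set.mem_iUnion.2 ⟨(-(n:ℤ)-1-i).toNat, ?_⟩
      have hidx : -(n:ℤ)-1-((-(n:ℤ)-1-i).toNat : ℤ) = i := by omega
      have hval : η i = true := by
        cases h : η i
        · exact absurd h hne
        · rfl
      simp only [Set.mem_setOf_eq, hidx]
      exact hval
  have geom : ∀ m : ℕ, (∑' k : ℕ, ENNReal.ofReal (q^(m+k)))
      = ENNReal.ofReal (q^m * (1-q)⁻¹) := by
    intro m
    have hsummable : Summable (fun k : ℕ => q^(m+k)) := by
      apply Summable.congr ((summable_geometric_of_lt_one hq0.le hq1).mul_left (q^m))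
      intro k
      rw [pow_add]
    rw [← ENNReal.ofReal_tsum_of_nonneg (fun k => pow_nonneg hq0.le _) hsummable]
    congr 1
    rw [tsum_congr (fun k => pow_add q m k), tsum_mul_left,
      tsum_geometric_of_lt_one hq0.le hq1]
  have bound1 : ∀ k : ℕ, ν {η : ℤ → Bool | η ((n:ℤ)+2+k) = false}
      ≤ ENNReal.ofReal (q^(n+1+k)) := by
    intro k
    rw [show ((n:ℤ)+2+(k:ℤ)) = ((n+2+k : ℕ) : ℤ) by push_cast; ring, marg_false hq0 hmarg,
      zpow_natCast]
    apply ENNReal.ofReal_le_ofReal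
    have hp : (0:ℝ) < q^(n+2+k) := pow_pos hq0 _
    calc q^(n+2+k)/(1+q^(n+2+k)) ≤ q^(n+2+k) := by
          apply div_le_self hp.le
          nlinarith
      _ ≤ q^(n+1+k) := pow_le_pow_of_le_one hq0.le hq1.le (by omega)
  have bound2 : ∀ k : ℕ, ν {η : ℤ → Bool | η (-(n:ℤ)-1-k) = true}
      ≤ ENNReal.ofReal (q^(n+1+k)) := by
    intro k
    rw [show (-(n:ℤ)-1-(k:ℤ)) = -((n+1+k : ℕ) : ℤ) by push_cast; ring, marg_true hq0 hmarg,
      inv_form1 hq0]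
    apply ENNReal.ofReal_le_ofReal
    have hp : (0:ℝ) < q^(n+1+k) := pow_pos hq0 _
    apply div_le_self hp.le
    nlinarith
  calc ν (Tailev n)ᶜ ≤ ν ((⋃ k : ℕ, {η : ℤ → Bool | η ((n:ℤ)+2+k) = false}) ∪
      (⋃ k : ℕ, {η : ℤ → Bool | η (-(n:ℤ)-1-k) = true})) := measure_mono hsub
    _ ≤ ν (⋃ k : ℕ, {η : ℤ → Bool | η ((n:ℤ)+2+k) = false})
        + ν (⋃ k : ℕ, {η : ℤ → Bool | η (-(n:ℤ)-1-k) = true}) := measure_union_le _ _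
    _ ≤ (∑' k : ℕ, ν {η : ℤ → Bool | η ((n:ℤ)+2+k) = false})
        + ∑' k : ℕ, ν {η : ℤ → Bool | η (-(n:ℤ)-1-k) = true} :=
        add_le_add (measure_iUnion_le _) (measure_iUnion_le _)
    _ ≤ (∑' k : ℕ, ENNReal.ofReal (q^(n+1+k))) + ∑' k : ℕ, ENNReal.ofReal (q^(n+1+k)) :=
        add_le_add (ENNReal.tsum_le_tsum bound1) (ENNReal.tsum_le_tsum bound2)
    _ = ENNReal.ofReal (q^(n+1) * (1-q)⁻¹) + ENNReal.ofReal (q^(n+1) * (1-q)⁻¹) := by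
        rw [geom (n+1)]
    _ = ENNReal.ofReal (2 * (q^(n+1) * (1-q)⁻¹)) := by
        rw [← ENNReal.ofReal_add (by positivity) (by positivity)]
        congr 1
        ring

end Fmeas


lemma incl_blocking (n : ℕ) : Fev n ∩ Tailev n ⊆ blockingSet 0 := by
  rintro η ⟨hF, hT⟩
  rw [Fev, Set.mem_iUnion₂] at hF
  obtain ⟨p, hp, hC⟩ := hF
  obtain ⟨a, b⟩ := p
  rw [Sset, Finset.mem_filter] at hp
  have hab : cntF a = cntT b := hp.2
  have hη : ∀ i ∈ Finset.Icc (-(n:ℤ)) ((n:ℤ)+1), η i = gfun n a b i := hC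
  have hpos : ∀ j : Fin n, η ((j:ℤ)+1) = a j := by
    intro j
    have hj := j.2
    rw [hη _ (Finset.mem_Icc.2 (by omega)), gfun_pos]
  have hneg : ∀ j : Fin n, η (-(j:ℤ)-1) = b j := by
    intro j
    have hj := j.2
    rw [hη _ (Finset.mem_Icc.2 (by omega)), gfun_neg]
  have h0 : η 0 = false := by
    rw [hη 0 (Finset.mem_Icc.2 (by omega)), gfun_zero]
  have htop : η ((n:ℤ)+1) = true := by
    rw [hη _ (Finset.mem_Icc.2 (by omega)), gfun_top]
  have hS1 : {i : ℤ | 0 < i ∧ η i = false}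
      = (fun j : Fin n => (j:ℤ)+1) '' {j | a j = false} := by
    ext i
    simp only [Set.mem_setOf_eq, Set.mem_image]
    constructor
    · rintro ⟨hi, hfalse⟩
      by_cases hbig : (n:ℤ)+1 < i
      · rw [hT.1 i hbig] at hfalse; exact absurd hfalse (by simp)
      by_cases hteq : i = (n:ℤ)+1
      · rw [hteq, htop] at hfalse; exact absurd hfalse (by simp)
      have hwin : 1 ≤ i ∧ i ≤ (n:ℤ) := by omega
      have hn0 : (i-1).toNat < n := by omega
      refine ⟨⟨(i-1).toNat, hn0⟩, ?_, ?_⟩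
      · have hji : ((⟨(i-1).toNat, hn0⟩ : Fin n) : ℤ) + 1 = i := by
          simp only [Fin.val_mk]
          omega
        rw [← hpos ⟨(i-1).toNat, hn0⟩, hji]
        exact hfalse
      · simp; omega
    · rintro ⟨j, hj, rfl⟩
      have := j.2
      exact ⟨by omega, by rw [hpos j]; exact hj⟩
  have hS2 : {i : ℤ | i ≤ 0 ∧ η i = true}
      = (fun j : Fin n => -(j:ℤ)-1) '' {j | b j = true} := by
    ext i
    simp only [Set.mem_setOf_eq, Set.mem_image]
    constructor
    · rintro ⟨hi, htrue⟩
      by_cases hzero : i = 0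
      · rw [hzero, h0] at htrue; exact absurd htrue (by simp)
      by_cases hsmall : i < -(n:ℤ)
      · rw [hT.2 i hsmall] at htrue; exact absurd htrue (by simp)
      have hwin : -(n:ℤ) ≤ i ∧ i ≤ -1 := by omega
      have hn0 : (-i-1).toNat < n := by omega
      refine ⟨⟨(-i-1).toNat, hn0⟩, ?_, ?_⟩
      · have hji : -((⟨(-i-1).toNat, hn0⟩ : Fin n) : ℤ) - 1 = i := by
          simp only [Fin.val_mk]
          omega
        rw [← hneg ⟨(-i-1).toNat, hn0⟩, hji]
        exact htrue
      · simp; omega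
    · rintro ⟨j, hj, rfl⟩
      have := j.2
      exact ⟨by omega, by rw [hneg j]; exact hj⟩
  have hinj1 : Function.Injective (fun j : Fin n => (j:ℤ)+1) := by
    intro x y hxy
    simp only at hxy
    apply Fin.ext
    omega
  have hinj2 : Function.Injective (fun j : Fin n => -(j:ℤ)-1) := by
    intro x y hxy
    simp only at hxy
    apply Fin.ext
    omega
  have hfin1 : {i : ℤ | 0 < i ∧ η i = false}.Finite := by
    rw [hS1]; exact (Set.toFinite _).image _
  have hfin2 : {i : ℤ | i ≤ 0 ∧ η i = true}.Finite := by
    rw [hS2]; exact (Set.toFinite _).image _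
  refine ⟨hfin1, hfin2, ?_⟩
  rw [hS1, hS2, Set.ncard_image_of_injective _ hinj1, Set.ncard_image_of_injective _ hinj2]
  have e1 : {j : Fin n | a j = false} = ↑(Finset.univ.filter fun j => a j = false) := by
    ext j; simp
  have e2 : {j : Fin n | b j = true} = ↑(Finset.univ.filter fun j => b j = true) := by
    ext j; simp
  rw [e1, e2, Set.ncard_coe_finset, Set.ncard_coe_finset]
  exact hab

/-- For every `ε ∈ (0,1)` there is `c > 0` depending only on `ε` such that for all
`q ∈ (ε,1)` the product Bernoulli measure `ν̃` with marginals
`ν̃(η(x)=1) = q^{-x}/(1+q^{-x})` satisfies `ν̃(A₀) ≥ c (1-q)`. -/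
theorem stmt16 (ε : ℝ) (hε0 : 0 < ε) (hε1 : ε < 1) :
    ∃ c > (0 : ℝ), ∀ q : ℝ, ε < q → q < 1 →
      ∀ ν : Measure (ℤ → Bool), IsProbabilityMeasure ν →
        iIndepFun (fun i η => η i) ν →
        (∀ x : ℤ, ν {η | η x = true} = ENNReal.ofReal (q ^ (-x) / (1 + q ^ (-x)))) →
        ENNReal.ofReal (c * (1 - q)) ≤ ν (blockingSet 0) := by
  refine ⟨1/96, by norm_num, ?_⟩
  intro q hεq hq1 ν hprob hInd hmarg
  haveI := hprob
  have hq0 : 0 < q := lt_trans hε0 hεq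
  have h1q : (0:ℝ) < 1 - q := by linarith
  obtain ⟨n, hn⟩ := exists_pow_lt_of_lt_one (show (0:ℝ) < (1-q)^2/192 by positivity) hq1
  have hqn : q^(n+1) ≤ (1-q)^2/192 := by
    refine le_trans ?_ hn.le
    calc q^(n+1) = q^n * q := pow_succ q n
      _ ≤ q^n * 1 := by nlinarith [pow_nonneg hq0.le n]
      _ = q^n := mul_one _
  have htail : ν (Tailev n)ᶜ ≤ ENNReal.ofReal ((1-q)/96) := by
    refine le_trans (measTail hq0 hq1 hmarg n) (ENNReal.ofReal_le_ofReal ?_)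
    have hinv : (0:ℝ) ≤ (1-q)⁻¹ := (inv_nonneg).2 h1q.le
    have hstep : q^(n+1) * (1-q)⁻¹ ≤ ((1-q)^2/192) * (1-q)⁻¹ :=
      mul_le_mul_of_nonneg_right hqn hinv
    have he : ((1-q)^2/192) * (1-q)⁻¹ = (1-q)/192 := by
      field_simp
    rw [he] at hstep
    linarith
  have hF := measF_lower hq0 hq1 hmarg hInd n
  have hsub : Fev n ⊆ (Fev n ∩ Tailev n) ∪ (Tailev n)ᶜ := by
    intro η hη
    by_cases h : η ∈ Tailev n
    · exact Or.inl ⟨hη, h⟩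
    · exact Or.inr h
  have hchain : ν (Fev n) ≤ ν (Fev n ∩ Tailev n) + ν (Tailev n)ᶜ :=
    le_trans (measure_mono hsub) (measure_union_le _ _)
  have hhalf : ENNReal.ofReal ((1-q)/96) + ν (Tailev n)ᶜ ≤ ν (Fev n) := by
    calc ENNReal.ofReal ((1-q)/96) + ν (Tailev n)ᶜ
        ≤ ENNReal.ofReal ((1-q)/96) + ENNReal.ofReal ((1-q)/96) := add_le_add le_rfl htail
      _ = ENNReal.ofReal ((1-q)/48) := by
          rw [← ENNReal.ofReal_add (div_nonneg h1q.le (by norm_num))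
            (div_nonneg h1q.le (by norm_num))]
          congr 1
          ring
      _ ≤ ν (Fev n) := hF
  have hfinal : ENNReal.ofReal ((1-q)/96) ≤ ν (Fev n ∩ Tailev n) := by
    have hne : ν (Tailev n)ᶜ ≠ ⊤ := measure_ne_top ν _
    exact (ENNReal.add_le_add_iff_right hne).1 (le_trans hhalf hchain)
  calc ENNReal.ofReal (1/96 * (1-q)) = ENNReal.ofReal ((1-q)/96) := by
        congr 1
        ring
    _ ≤ ν (Fev n ∩ Tailev n) := hfinal
    _ ≤ ν (blockingSet 0) := measure_mono (incl_blocking n)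
end
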